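/- arXiv:2008.00828 — 10 statements merged into one kernel-verified Lean document; each statement's English description precedes it below -/
import Mathlib

section
/- Let T be the 3×3 real matrix with first row (0, β_I N, β_A N) and all other entries zero, and let Σ be the 3×3 real matrix with rows (−(k+μ), 0, 0), (k(1−q), −(γ_I+μ), 0), (kq, 0, −(γ_A+μ)). Then the matrix K = −T Σ⁻¹ has characteristic polynomial λ²(λ − R₀); equivalently, the eigenvalues of K are 0 (with algebraic multiplicity 2) and R₀ = β_I N k(1−q)/((k+μ)(γ_I+μ)) + β_A N k q/((k+μ)(γ_A+μ)). In particular R₀ is the dominant (largest-modulus) eigenvalue of the next-generation matrix K. -/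
open Matrix Polynomial

/-- The next-generation matrix `K = -T * Σ⁻¹` of the linearised infection subsystem of the
SEIAR model has characteristic polynomial `λ² (λ - R₀)`, so its eigenvalues are `0` (with
algebraic multiplicity 2) and `R₀`; in particular `R₀` is the dominant eigenvalue of `K`. -/
theorem seiar_next_generation_matrix_charpoly
    (N μ βI βA k γI γA q : ℝ)
    (hN : 0 < N) (hμ : 0 < μ) (hβI : 0 < βI) (hβA : 0 < βA)
    (hk : 0 < k) (hγI : 0 < γI) (hγA : 0 < γA)
    (hq0 : 0 ≤ q) (hq1 : q ≤ 1)
    (T Sig K : Matrix (Fin 3) (Fin 3) ℝ) (R₀ : ℝ)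
    (hT : T = !![0, βI * N, βA * N; 0, 0, 0; 0, 0, 0])
    (hSig : Sig = !![-(k + μ), 0, 0;
                     k * (1 - q), -(γI + μ), 0;
                     k * q, 0, -(γA + μ)])
    (hK : K = -(T * Sig⁻¹))
    (hR₀ : R₀ = βI * N * k * (1 - q) / ((k + μ) * (γI + μ))
              + βA * N * k * q / ((k + μ) * (γA + μ))) :
    K.charpoly = X ^ 2 * (X - C R₀) ∧
      R₀ ∈ spectrum ℝ K ∧
      ∀ z : ℂ, z ∈ spectrum ℂ (K.map Complex.ofReal) → ‖z‖ ≤ R₀ := by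
  have hd1 : k + μ ≠ 0 := by positivity
  have hd2 : γI + μ ≠ 0 := by positivity
  have hd3 : γA + μ ≠ 0 := by positivity
  -- explicit inverse of Sig
  set B : Matrix (Fin 3) (Fin 3) ℝ :=
    !![-(1/(k+μ)), 0, 0;
       -(k*(1-q)/((k+μ)*(γI+μ))), -(1/(γI+μ)), 0;
       -(k*q/((k+μ)*(γA+μ))), 0, -(1/(γA+μ))] with hB
  have hSB : Sig * B = 1 := by
    subst hSig
    rw [hB, Matrix.mul_fin_three]
    ext i j
    fin_cases i <;> fin_cases j <;>
      simp [Matrix.vecHead, Matrix.vecTail] <;> field_simp <;> ring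
  have hSinv : Sig⁻¹ = B := Matrix.inv_eq_right_inv hSB
  have hKex : K = !![R₀, βI*N/(γI+μ), βA*N/(γA+μ); 0,0,0; 0,0,0] := by
    rw [hK, hSinv, hT, hB, Matrix.mul_fin_three]
    ext i j
    fin_cases i <;> fin_cases j <;> simp [Matrix.vecHead, Matrix.vecTail, hR₀] <;>
      field_simp <;> ring
  have hR₀nn : 0 ≤ R₀ := by
    rw [hR₀]
    have h1q : 0 ≤ 1 - q := by linarith
    apply add_nonneg <;> apply div_nonneg <;> positivity
  have hchar : K.charpoly = X ^ 2 * (X - C R₀) := by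
    rw [hKex, Matrix.charpoly, Matrix.det_fin_three]
    simp [charmatrix_apply_eq, charmatrix_apply_ne, Matrix.vecHead, Matrix.vecTail]
    ring
  refine ⟨hchar, ?_, ?_⟩
  · rw [spectrum.mem_iff]
    rw [Matrix.isUnit_iff_isUnit_det]
    intro h
    have hdet : ((algebraMap ℝ (Matrix (Fin 3) (Fin 3) ℝ)) R₀ - K).det = 0 := by
      rw [hKex, Matrix.det_fin_three]
      simp only [Matrix.algebraMap_matrix_apply, Matrix.sub_apply]
      norm_num [Matrix.vecHead, Matrix.vecTail, Fin.ext_iff, Matrix.cons_val_two]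
    rw [hdet] at h
    exact (by simp at h : False)
  · intro z hz
    rw [spectrum.mem_iff, Matrix.isUnit_iff_isUnit_det] at hz
    have hdet : ((algebraMap ℂ (Matrix (Fin 3) (Fin 3) ℂ)) z - K.map Complex.ofReal).det
        = (z - (R₀ : ℂ)) * z ^ 2 := by
      rw [hKex, Matrix.det_fin_three]
      simp only [Matrix.algebraMap_matrix_apply, Matrix.sub_apply, Matrix.map_apply]
      norm_num [Matrix.vecHead, Matrix.vecTail, Fin.ext_iff, Matrix.cons_val_two]
      ring
    have h0 : (z - (R₀ : ℂ)) * z ^ 2 = 0 := by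
      by_contra h
      exact hz (isUnit_iff_ne_zero.mpr (hdet ▸ h))
    rcases mul_eq_zero.mp h0 with h | h
    · have : z = (R₀ : ℂ) := by linear_combination h
      rw [this]
      simp [Complex.norm_real, abs_of_nonneg hR₀nn]
    · have : z = 0 := by
        have := pow_eq_zero_iff (n := 2) (by norm_num) |>.mp h
        exact this
      simp [this, hR₀nn]
end

section
/- If differentiable functions S, E, I, A, R : [0,∞) → ℝ satisfy the SEIAR system S' = μN − β_I S I − β_A S A − μS, E' = β_I S I + β_A S A − (k+μ)E, I' = k(1−q)E − (γ_I+μ)I, A' = kqE − (γ_A+μ)A, R' = γ_I I + γ_A A − μR, with nonnegative initial data (S(0), E(0), I(0), A(0), R(0)) ∈ (ℝ₀⁺)⁵, then S(t), E(t), I(t), A(t), R(t) remain nonnegative for all t ≥ 0. -/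
open Set Filter Topology

/-- If `|a| ≤ Ma` and `|b| ≤ Mb`, then `-(a*b)` is controlled by the negative parts
of `a` and `b`. -/
lemma seiar_neg_mul_le {a b Ma Mb : ℝ} (ha : |a| ≤ Ma) (hb : |b| ≤ Mb) :
    -(a * b) ≤ Mb * max (-a) 0 + Ma * max (-b) 0 := by
  obtain ⟨ha1, ha2⟩ := abs_le.1 ha
  obtain ⟨hb1, hb2⟩ := abs_le.1 hb
  rcases le_or_gt 0 a with hA | hA <;> rcases le_or_gt 0 b with hB | hB
  · rw [max_eq_right (neg_nonpos.2 hA), max_eq_right (neg_nonpos.2 hB)]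
    linarith [mul_nonneg hA hB]
  · rw [max_eq_right (neg_nonpos.2 hA), max_eq_left (le_of_lt (neg_pos.2 hB))]
    linarith [mul_nonneg (by linarith : (0:ℝ) ≤ Ma - a) (by linarith : (0:ℝ) ≤ -b)]
  · rw [max_eq_left (le_of_lt (neg_pos.2 hA)), max_eq_right (neg_nonpos.2 hB)]
    linarith [mul_nonneg (by linarith : (0:ℝ) ≤ Mb - b) (by linarith : (0:ℝ) ≤ -a)]
  · rw [max_eq_left (le_of_lt (neg_pos.2 hA)), max_eq_left (le_of_lt (neg_pos.2 hB))]
    have hMa0 : 0 ≤ Ma := le_trans (abs_nonneg a) ha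
    have hMb0 : 0 ≤ Mb := le_trans (abs_nonneg b) hb
    linarith [mul_nonneg (by linarith : (0:ℝ) ≤ -a) (by linarith : (0:ℝ) ≤ -b),
      mul_nonneg hMb0 (by linarith : (0:ℝ) ≤ -a), mul_nonneg hMa0 (by linarith : (0:ℝ) ≤ -b)]

/-- Right slope estimate for the negative part `max (-x ·) 0` of a differentiable function. -/
lemma seiar_slope_aux {x : ℝ → ℝ} {x' t d r : ℝ} (ht : (0:ℝ) ≤ t)
    (hx : HasDerivWithinAt x x' (Set.Ici 0) t)
    (hd0 : 0 ≤ d) (hd : x t ≤ 0 → -x' ≤ d) (hr : d < r) :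
    ∀ᶠ z in 𝓝[>] t, (z - t)⁻¹ * (max (-x z) 0 - max (-x t) 0) < r := by
  have hsub : Set.Ioi t ⊆ Set.Ici (0:ℝ) := fun z hz => le_trans ht (le_of_lt hz)
  rcases le_or_gt (x t) 0 with hxt | hxt
  · have hx' : -d ≤ x' := by linarith [hd hxt]
    have hslope : Tendsto (slope x t) (𝓝[Set.Ici 0 \ {t}] t) (𝓝 x') :=
      hasDerivWithinAt_iff_tendsto_slope.1 hx
    have hsub2 : Set.Ioi t ⊆ Set.Ici (0:ℝ) \ {t} := fun z hz => ⟨hsub hz, ne_of_gt hz⟩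
    have h1 : ∀ᶠ z in 𝓝[>] t, -r < slope x t z :=
      (hslope.mono_left (nhdsWithin_mono t hsub2)).eventually
        (eventually_gt_nhds (by linarith))
    filter_upwards [h1, self_mem_nhdsWithin] with z h1 hz
    rw [Set.mem_Ioi] at hz
    have hzt : 0 < z - t := by linarith
    rw [slope_def_field, div_eq_mul_inv] at h1
    have h1' : -r * (z - t) < x z - x t := by
      have := (mul_lt_mul_iff_of_pos_right hzt).2 h1
      rwa [mul_assoc, inv_mul_cancel₀ (ne_of_gt hzt), mul_one] at this
    rw [max_eq_left (neg_nonneg.2 hxt)]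
    rcases le_or_gt (-x z) 0 with hxz | hxz
    · rw [max_eq_right hxz]
      have h2 : (z - t)⁻¹ * (0 - -x t) ≤ 0 := by
        have : (0:ℝ) ≤ (z - t)⁻¹ * (-x t) := mul_nonneg (le_of_lt (inv_pos.2 hzt))
          (neg_nonneg.2 hxt)
        linarith
      linarith
    · rw [max_eq_left (le_of_lt hxz)]
      rw [inv_mul_lt_iff₀ hzt]
      linarith
  · have hc : Tendsto x (𝓝[Set.Ici 0] t) (𝓝 (x t)) := hx.continuousWithinAt
    have h1 : ∀ᶠ z in 𝓝[Set.Ici 0] t, 0 < x z := hc.eventually (eventually_gt_nhds hxt)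
    have h2 : ∀ᶠ z in 𝓝[>] t, 0 < x z := (nhdsWithin_mono t hsub) h1
    filter_upwards [h2] with z hz
    rw [max_eq_right (neg_nonpos.2 (le_of_lt hz)), max_eq_right (neg_nonpos.2 (le_of_lt hxt))]
    simpa using lt_of_le_of_lt hd0 hr

set_option maxHeartbeats 1000000 in
/-- Solutions of the SEIAR system on `[0,∞)` with nonnegative initial data remain
nonnegative for all `t ≥ 0`. -/
theorem seiar_nonnegativity
    (N μ βI βA k γI γA q : ℝ)
    (hN : 0 < N) (hμ : 0 < μ) (hβI : 0 < βI) (hβA : 0 < βA)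
    (hk : 0 < k) (hγI : 0 < γI) (hγA : 0 < γA)
    (hq0 : 0 ≤ q) (hq1 : q ≤ 1)
    (S E I A R : ℝ → ℝ)
    (hS : ∀ t ∈ Set.Ici (0 : ℝ),
      HasDerivWithinAt S (μ * N - βI * S t * I t - βA * S t * A t - μ * S t) (Set.Ici 0) t)
    (hE : ∀ t ∈ Set.Ici (0 : ℝ),
      HasDerivWithinAt E (βI * S t * I t + βA * S t * A t - (k + μ) * E t) (Set.Ici 0) t)
    (hI : ∀ t ∈ Set.Ici (0 : ℝ),
      HasDerivWithinAt I (k * (1 - q) * E t - (γI + μ) * I t) (Set.Ici 0) t)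
    (hA : ∀ t ∈ Set.Ici (0 : ℝ),
      HasDerivWithinAt A (k * q * E t - (γA + μ) * A t) (Set.Ici 0) t)
    (hR : ∀ t ∈ Set.Ici (0 : ℝ),
      HasDerivWithinAt R (γI * I t + γA * A t - μ * R t) (Set.Ici 0) t)
    (hS0 : 0 ≤ S 0) (hE0 : 0 ≤ E 0) (hI0 : 0 ≤ I 0) (hA0 : 0 ≤ A 0) (hR0 : 0 ≤ R 0) :
    ∀ t ∈ Set.Ici (0 : ℝ), 0 ≤ S t ∧ 0 ≤ E t ∧ 0 ≤ I t ∧ 0 ≤ A t ∧ 0 ≤ R t := by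
  intro T hT
  rw [Set.mem_Ici] at hT
  have hIcc : Set.Icc (0:ℝ) T ⊆ Set.Ici 0 := fun s hs => hs.1
  -- continuity on [0,T]
  have hScont : ContinuousOn S (Set.Icc 0 T) := fun s hs =>
    ((hS s (hIcc hs)).continuousWithinAt).mono hIcc
  have hEcont : ContinuousOn E (Set.Icc 0 T) := fun s hs =>
    ((hE s (hIcc hs)).continuousWithinAt).mono hIcc
  have hIcont : ContinuousOn I (Set.Icc 0 T) := fun s hs =>
    ((hI s (hIcc hs)).continuousWithinAt).mono hIcc
  have hAcont : ContinuousOn A (Set.Icc 0 T) := fun s hs =>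
    ((hA s (hIcc hs)).continuousWithinAt).mono hIcc
  have hRcont : ContinuousOn R (Set.Icc 0 T) := fun s hs =>
    ((hR s (hIcc hs)).continuousWithinAt).mono hIcc
  -- bounds on S, I, A
  obtain ⟨CS, hCS⟩ := isCompact_Icc.exists_bound_of_continuousOn hScont
  obtain ⟨CI, hCI⟩ := isCompact_Icc.exists_bound_of_continuousOn hIcont
  obtain ⟨CA, hCA⟩ := isCompact_Icc.exists_bound_of_continuousOn hAcont
  have h0mem : (0:ℝ) ∈ Set.Icc (0:ℝ) T := ⟨le_refl 0, hT⟩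
  have hCS0 : 0 ≤ CS := le_trans (norm_nonneg _) (hCS 0 h0mem)
  have hCI0 : 0 ≤ CI := le_trans (norm_nonneg _) (hCI 0 h0mem)
  have hCA0 : 0 ≤ CA := le_trans (norm_nonneg _) (hCA 0 h0mem)
  have hCS' : ∀ s ∈ Set.Icc (0:ℝ) T, |S s| ≤ CS := fun s hs => by
    have := hCS s hs; rwa [Real.norm_eq_abs] at this
  have hCI' : ∀ s ∈ Set.Icc (0:ℝ) T, |I s| ≤ CI := fun s hs => by
    have := hCI s hs; rwa [Real.norm_eq_abs] at this
  have hCA' : ∀ s ∈ Set.Icc (0:ℝ) T, |A s| ≤ CA := fun s hs => by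
    have := hCA s hs; rwa [Real.norm_eq_abs] at this
  obtain ⟨M, hMdef⟩ : ∃ M : ℝ, M = βI * CI + βA * CA + μ := ⟨_, rfl⟩
  obtain ⟨K, hKdef⟩ : ∃ K : ℝ,
      K = M + βI * (CI + CS) + βA * (CA + CS) + k + γI + γA := ⟨_, rfl⟩
  have hM0 : 0 ≤ M := by
    have := mul_nonneg hβI.le hCI0
    have := mul_nonneg hβA.le hCA0
    rw [hMdef]; linarith
  have hK0 : 0 ≤ K := by
    have := mul_nonneg hβI.le (by linarith : (0:ℝ) ≤ CI + CS)
    have := mul_nonneg hβA.le (by linarith : (0:ℝ) ≤ CA + CS)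
    rw [hKdef]; linarith
  -- the sum of negative parts
  obtain ⟨f, hfdef⟩ : ∃ f : ℝ → ℝ, f = fun u =>
      max (-S u) 0 + max (-E u) 0 + max (-I u) 0 + max (-A u) 0 + max (-R u) 0 := ⟨_, rfl⟩
  have hfval : ∀ u, f u =
      max (-S u) 0 + max (-E u) 0 + max (-I u) 0 + max (-A u) 0 + max (-R u) 0 := by
    intro u; rw [hfdef]
  have hfcont : ContinuousOn f (Set.Icc 0 T) := by
    rw [hfdef]
    apply ContinuousOn.add
    apply ContinuousOn.add
    apply ContinuousOn.add
    apply ContinuousOn.add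
    · exact (continuous_id.max continuous_const).comp_continuousOn hScont.neg
    · exact (continuous_id.max continuous_const).comp_continuousOn hEcont.neg
    · exact (continuous_id.max continuous_const).comp_continuousOn hIcont.neg
    · exact (continuous_id.max continuous_const).comp_continuousOn hAcont.neg
    · exact (continuous_id.max continuous_const).comp_continuousOn hRcont.neg
  have hf0 : f 0 ≤ 0 := by
    rw [hfval 0, max_eq_right (neg_nonpos.2 hS0), max_eq_right (neg_nonpos.2 hE0),
      max_eq_right (neg_nonpos.2 hI0), max_eq_right (neg_nonpos.2 hA0),
      max_eq_right (neg_nonpos.2 hR0)]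
    norm_num
  -- the key slope estimate
  have hf' : ∀ s ∈ Set.Ico (0:ℝ) T, ∀ r, K * f s < r →
      ∃ᶠ z in 𝓝[>] s, (z - s)⁻¹ * (f z - f s) < r := by
    intro s hs r hr
    have hs0 : (0:ℝ) ≤ s := hs.1
    have hsmem : s ∈ Set.Icc (0:ℝ) T := ⟨hs.1, le_of_lt hs.2⟩
    have hsI : s ∈ Set.Ici (0:ℝ) := hs.1
    obtain ⟨hSb1, hSb2⟩ := abs_le.1 (hCS' s hsmem)
    obtain ⟨hIb1, hIb2⟩ := abs_le.1 (hCI' s hsmem)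
    obtain ⟨hAb1, hAb2⟩ := abs_le.1 (hCA' s hsmem)
    have hgS0 : 0 ≤ max (-S s) 0 := le_max_right _ _
    have hgE0 : 0 ≤ max (-E s) 0 := le_max_right _ _
    have hgI0 : 0 ≤ max (-I s) 0 := le_max_right _ _
    have hgA0 : 0 ≤ max (-A s) 0 := le_max_right _ _
    have hgR0 : 0 ≤ max (-R s) 0 := le_max_right _ _
    -- per-component bounds
    obtain ⟨dS, hdSdef⟩ : ∃ d : ℝ, d = M * max (-S s) 0 := ⟨_, rfl⟩
    obtain ⟨dE, hdEdef⟩ : ∃ d : ℝ, d = βI * (CI * max (-S s) 0 + CS * max (-I s) 0)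
        + βA * (CA * max (-S s) 0 + CS * max (-A s) 0) := ⟨_, rfl⟩
    obtain ⟨dI, hdIdef⟩ : ∃ d : ℝ, d = k * (1 - q) * max (-E s) 0 := ⟨_, rfl⟩
    obtain ⟨dA, hdAdef⟩ : ∃ d : ℝ, d = k * q * max (-E s) 0 := ⟨_, rfl⟩
    obtain ⟨dR, hdRdef⟩ : ∃ d : ℝ, d = γI * max (-I s) 0 + γA * max (-A s) 0 := ⟨_, rfl⟩
    have hdS0 : 0 ≤ dS := by rw [hdSdef]; exact mul_nonneg hM0 hgS0
    have hdE0 : 0 ≤ dE := by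
      rw [hdEdef]
      have h1 : 0 ≤ CI * max (-S s) 0 + CS * max (-I s) 0 := by positivity
      have h2 : 0 ≤ CA * max (-S s) 0 + CS * max (-A s) 0 := by positivity
      positivity
    have hdI0 : 0 ≤ dI := by
      rw [hdIdef]; exact mul_nonneg (mul_nonneg hk.le (by linarith)) hgE0
    have hdA0 : 0 ≤ dA := by rw [hdAdef]; exact mul_nonneg (mul_nonneg hk.le hq0) hgE0
    have hdR0 : 0 ≤ dR := by rw [hdRdef]; positivity
    -- total bound
    have hsum : dS + dE + dI + dA + dR ≤ K * f s := by
      have e1 : 0 ≤ βI * CS := mul_nonneg hβI.le hCS0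
      have e2 : 0 ≤ βA * CS := mul_nonneg hβA.le hCS0
      have e3 : 0 ≤ βI * CI := mul_nonneg hβI.le hCI0
      have e4 : 0 ≤ βA * CA := mul_nonneg hβA.le hCA0
      have b1 : (M + βI * CI + βA * CA) * max (-S s) 0 ≤ K * max (-S s) 0 :=
        mul_le_mul_of_nonneg_right (by rw [hKdef]; linarith) hgS0
      have b2 : k * max (-E s) 0 ≤ K * max (-E s) 0 :=
        mul_le_mul_of_nonneg_right (by rw [hKdef, hMdef]; linarith) hgE0
      have b3 : (βI * CS + γI) * max (-I s) 0 ≤ K * max (-I s) 0 :=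
        mul_le_mul_of_nonneg_right (by rw [hKdef, hMdef]; linarith) hgI0
      have b4 : (βA * CS + γA) * max (-A s) 0 ≤ K * max (-A s) 0 :=
        mul_le_mul_of_nonneg_right (by rw [hKdef, hMdef]; linarith) hgA0
      have b5 : 0 ≤ K * max (-R s) 0 := mul_nonneg hK0 hgR0
      have heq : dS + dE + dI + dA + dR = (M + βI * CI + βA * CA) * max (-S s) 0
          + k * max (-E s) 0 + (βI * CS + γI) * max (-I s) 0
          + (βA * CS + γA) * max (-A s) 0 := by
        rw [hdSdef, hdEdef, hdIdef, hdAdef, hdRdef]; ring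
      have hexp : K * f s = K * max (-S s) 0 + K * max (-E s) 0 + K * max (-I s) 0
          + K * max (-A s) 0 + K * max (-R s) 0 := by
        rw [hfval s]; ring
      rw [heq, hexp]; linarith
    obtain ⟨ε, hεdef⟩ : ∃ e : ℝ, e = (r - K * f s) / 5 := ⟨_, rfl⟩
    have hε : 0 < ε := by rw [hεdef]; exact div_pos (sub_pos.2 hr) (by norm_num)
    -- component derivative conditions
    have hSd : S s ≤ 0 → -(μ * N - βI * S s * I s - βA * S s * A s - μ * S s) ≤ dS := by
      intro h
      rw [hdSdef, max_eq_left (neg_nonneg.2 h), hMdef]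
      linarith [mul_nonneg (mul_nonneg hβI.le (by linarith : (0:ℝ) ≤ I s + CI))
          (neg_nonneg.2 h),
        mul_nonneg (mul_nonneg hβA.le (by linarith : (0:ℝ) ≤ A s + CA)) (neg_nonneg.2 h),
        mul_pos hμ hN, mul_nonneg hμ.le (neg_nonneg.2 h)]
    have hEd : E s ≤ 0 → -(βI * S s * I s + βA * S s * A s - (k + μ) * E s) ≤ dE := by
      intro h
      have h1 : -(S s * I s) ≤ CI * max (-S s) 0 + CS * max (-I s) 0 :=
        seiar_neg_mul_le (hCS' s hsmem) (hCI' s hsmem)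
      have h2 : -(S s * A s) ≤ CA * max (-S s) 0 + CS * max (-A s) 0 :=
        seiar_neg_mul_le (hCS' s hsmem) (hCA' s hsmem)
      have h3 : (k + μ) * E s ≤ 0 := mul_nonpos_of_nonneg_of_nonpos (by linarith) h
      have h4 := mul_le_mul_of_nonneg_left h1 hβI.le
      have h5 := mul_le_mul_of_nonneg_left h2 hβA.le
      rw [hdEdef]; linarith
    have hId : I s ≤ 0 → -(k * (1 - q) * E s - (γI + μ) * I s) ≤ dI := by
      intro h
      have h1 : -E s ≤ max (-E s) 0 := le_max_left _ _
      have h2 : (γI + μ) * I s ≤ 0 := mul_nonpos_of_nonneg_of_nonpos (by linarith) h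
      have h3 := mul_le_mul_of_nonneg_left h1 (mul_nonneg hk.le (by linarith : (0:ℝ) ≤ 1 - q))
      rw [hdIdef]; linarith
    have hAd : A s ≤ 0 → -(k * q * E s - (γA + μ) * A s) ≤ dA := by
      intro h
      have h1 : -E s ≤ max (-E s) 0 := le_max_left _ _
      have h2 : (γA + μ) * A s ≤ 0 := mul_nonpos_of_nonneg_of_nonpos (by linarith) h
      have h3 := mul_le_mul_of_nonneg_left h1 (mul_nonneg hk.le hq0)
      rw [hdAdef]; linarith
    have hRd : R s ≤ 0 → -(γI * I s + γA * A s - μ * R s) ≤ dR := by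
      intro h
      have h1 : -I s ≤ max (-I s) 0 := le_max_left _ _
      have h2 : -A s ≤ max (-A s) 0 := le_max_left _ _
      have h3 : μ * R s ≤ 0 := mul_nonpos_of_nonneg_of_nonpos hμ.le h
      have h4 := mul_le_mul_of_nonneg_left h1 hγI.le
      have h5 := mul_le_mul_of_nonneg_left h2 hγA.le
      rw [hdRdef]; linarith
    -- eventual slope bounds
    have eS := seiar_slope_aux hs0 (hS s hsI) hdS0 hSd (lt_add_of_pos_right dS hε)
    have eE := seiar_slope_aux hs0 (hE s hsI) hdE0 hEd (lt_add_of_pos_right dE hε)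
    have eI := seiar_slope_aux hs0 (hI s hsI) hdI0 hId (lt_add_of_pos_right dI hε)
    have eA := seiar_slope_aux hs0 (hA s hsI) hdA0 hAd (lt_add_of_pos_right dA hε)
    have eR := seiar_slope_aux hs0 (hR s hsI) hdR0 hRd (lt_add_of_pos_right dR hε)
    apply Filter.Eventually.frequently
    filter_upwards [eS, eE, eI, eA, eR] with z hz1 hz2 hz3 hz4 hz5
    have hsplit : (z - s)⁻¹ * (f z - f s) =
        (z - s)⁻¹ * (max (-S z) 0 - max (-S s) 0) + (z - s)⁻¹ * (max (-E z) 0 - max (-E s) 0) +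
        (z - s)⁻¹ * (max (-I z) 0 - max (-I s) 0) + (z - s)⁻¹ * (max (-A z) 0 - max (-A s) 0) +
        (z - s)⁻¹ * (max (-R z) 0 - max (-R s) 0) := by
      rw [hfval z, hfval s]; ring
    rw [hsplit]
    have hεsum : dS + ε + (dE + ε) + (dI + ε) + (dA + ε) + (dR + ε) ≤ r := by
      rw [hεdef]; linarith
    linarith
  -- apply Grönwall
  have hgron := le_gronwallBound_of_liminf_deriv_right_le (f := f) (f' := fun u => K * f u)
    (δ := 0) (K := K) (ε := 0) hfcont hf' hf0
    (fun x _ => by simp)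
  have hfT : f T ≤ 0 := by
    have := hgron T ⟨hT, le_refl T⟩
    rwa [sub_zero, gronwallBound_ε0_δ0] at this
  rw [hfval T] at hfT
  have l1 : -S T ≤ max (-S T) 0 := le_max_left _ _
  have l2 : -E T ≤ max (-E T) 0 := le_max_left _ _
  have l3 : -I T ≤ max (-I T) 0 := le_max_left _ _
  have l4 : -A T ≤ max (-A T) 0 := le_max_left _ _
  have l5 : -R T ≤ max (-R T) 0 := le_max_left _ _
  have m1 : (0:ℝ) ≤ max (-S T) 0 := le_max_right _ _
  have m2 : (0:ℝ) ≤ max (-E T) 0 := le_max_right _ _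
  have m3 : (0:ℝ) ≤ max (-I T) 0 := le_max_right _ _
  have m4 : (0:ℝ) ≤ max (-A T) 0 := le_max_right _ _
  have m5 : (0:ℝ) ≤ max (-R T) 0 := le_max_right _ _
  exact ⟨by linarith, by linarith, by linarith, by linarith, by linarith⟩
end

section
/- The point (N, 0, 0, 0, 0) is an equilibrium of the SEIAR system, and the characteristic polynomial of the Jacobian matrix of the SEIAR system evaluated at (N, 0, 0, 0, 0) factors as (λ+μ)² · P(λ), where P(λ) = λ³ + (γ_I + γ_A + k + 3μ)λ² + [(k+μ)(γ_I+γ_A+2μ) + (γ_I+μ)(γ_A+μ) − Nk(β_I(1−q) + β_A q)]λ + (k+μ)(γ_I+μ)(γ_A+μ) − Nk(β_I(1−q)(γ_A+μ) + β_A q(γ_I+μ)). -/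
open Matrix Polynomial

set_option maxHeartbeats 1000000 in
/-- The point `(N,0,0,0,0)` is an equilibrium of the SEIAR system, and the characteristic
polynomial of the Jacobian matrix (the matrix of partial derivatives of the right-hand
sides) of the SEIAR system at `(N,0,0,0,0)` factors as `(λ + μ)² · P(λ)` with the cubic
`P` as in the paper. -/
theorem seiar_jacobian_dfe_charpoly
    (N μ βI βA k γI γA q : ℝ)
    (hN : 0 < N) (hμ : 0 < μ) (hβI : 0 < βI) (hβA : 0 < βA)
    (hk : 0 < k) (hγI : 0 < γI) (hγA : 0 < γA)
    (hq0 : 0 ≤ q) (hq1 : q ≤ 1)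
    (F : (Fin 5 → ℝ) → Fin 5 → ℝ)
    (hF : F = fun x => ![μ * N - βI * x 0 * x 2 - βA * x 0 * x 3 - μ * x 0,
                         βI * x 0 * x 2 + βA * x 0 * x 3 - (k + μ) * x 1,
                         k * (1 - q) * x 1 - (γI + μ) * x 2,
                         k * q * x 1 - (γA + μ) * x 3,
                         γI * x 2 + γA * x 3 - μ * x 4])
    (x₀ : Fin 5 → ℝ) (hx₀ : x₀ = ![N, 0, 0, 0, 0])
    (J : Matrix (Fin 5) (Fin 5) ℝ)
    (hJ : J = Matrix.of fun i j => fderiv ℝ (fun x => F x i) x₀ (Pi.single j 1)) :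
    F x₀ = 0 ∧
    J.charpoly = (X + C μ) ^ 2 *
      (X ^ 3 + C (γI + γA + k + 3 * μ) * X ^ 2
        + C ((k + μ) * (γI + γA + 2 * μ) + (γI + μ) * (γA + μ)
              - N * k * (βI * (1 - q) + βA * q)) * X
        + C ((k + μ) * (γI + μ) * (γA + μ)
              - N * k * (βI * (1 - q) * (γA + μ) + βA * q * (γI + μ)))) := by
  subst hF hx₀ hJ
  constructor
  · funext i
    fin_cases i <;> simp
  · -- Step 1: the Jacobian is the explicit matrix M
    have p : ∀ j : Fin 5, HasFDerivAt (fun x : Fin 5 → ℝ => x j)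
        (ContinuousLinearMap.proj j : (Fin 5 → ℝ) →L[ℝ] ℝ) (![N,0,0,0,0]) :=
      fun j => (ContinuousLinearMap.proj j : (Fin 5 → ℝ) →L[ℝ] ℝ).hasFDerivAt
    have hM : (Matrix.of fun i j => fderiv ℝ (fun x : Fin 5 → ℝ =>
        (![μ * N - βI * x 0 * x 2 - βA * x 0 * x 3 - μ * x 0,
           βI * x 0 * x 2 + βA * x 0 * x 3 - (k + μ) * x 1,
           k * (1 - q) * x 1 - (γI + μ) * x 2,
           k * q * x 1 - (γA + μ) * x 3,
           γI * x 2 + γA * x 3 - μ * x 4] : Fin 5 → ℝ) i) (![N,0,0,0,0]) (Pi.single j 1))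
        = !![-μ,0,-(βI*N),-(βA*N),0;
            0,-(k+μ),βI*N,βA*N,0;
            0,k*(1-q),-(γI+μ),0,0;
            0,k*q,0,-(γA+μ),0;
            0,0,γI,γA,-μ] := by
      ext i j
      fin_cases i <;> simp only [Matrix.of_apply] <;> simp
      · erw [((((hasFDerivAt_const (μ*N) _).sub (((p 0).const_mul βI).mul (p 2))).sub
            (((p 0).const_mul βA).mul (p 3))).sub ((p 0).const_mul μ)).fderiv]
        fin_cases j <;> simp [Pi.single_apply]
      · erw [(((((p 0).const_mul βI).mul (p 2)).add (((p 0).const_mul βA).mul (p 3))).sub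
            ((p 1).const_mul (k+μ))).fderiv]
        fin_cases j <;> simp [Pi.single_apply]
      · erw [(((p 1).const_mul (k*(1-q))).sub ((p 2).const_mul (γI+μ))).fderiv]
        fin_cases j <;> simp [Pi.single_apply]
      · erw [(((p 1).const_mul (k*q)).sub ((p 3).const_mul (γA+μ))).fderiv]
        fin_cases j <;> simp [Pi.single_apply]
      · erw [((((p 2).const_mul γI).add ((p 3).const_mul γA)).sub ((p 4).const_mul μ)).fderiv]
        fin_cases j <;> simp [Pi.single_apply]
    rw [hM, Matrix.charpoly]
    -- Step 2: the characteristic matrix is explicit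
    have hcm : Matrix.charmatrix (!![-μ,0,-(βI*N),-(βA*N),0;
            0,-(k+μ),βI*N,βA*N,0;
            0,k*(1-q),-(γI+μ),0,0;
            0,k*q,0,-(γA+μ),0;
            0,0,γI,γA,-μ] : Matrix (Fin 5) (Fin 5) ℝ)
        = (!![X + C μ, 0, C (βI*N), C (βA*N), 0;
            0, X + C (k+μ), -C (βI*N), -C (βA*N), 0;
            0, -C (k*(1-q)), X + C (γI+μ), 0, 0;
            0, -C (k*q), 0, X + C (γA+μ), 0;
            0, 0, -C γI, -C γA, X + C μ] : Matrix (Fin 5) (Fin 5) ℝ[X]) := by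
      ext i j
      rw [Matrix.charmatrix_apply]
      fin_cases i <;> fin_cases j <;>
        simp [Matrix.diagonal_apply, sub_eq_add_neg, Matrix.vecHead, Matrix.vecTail]
    rw [hcm]
    -- Step 3: compute the determinant
    simp [Matrix.det_succ_column_zero, Fin.sum_univ_succ, Fin.succAbove]
    simp only [map_add, _root_.map_mul, map_sub, _root_.map_one, map_ofNat, C_mul, C_add, C_sub]
    ring
end

section
/- (Theorem 1, local stability of the disease-free steady state.) If R₀ < 1, then every eigenvalue of the Jacobian matrix of the SEIAR system evaluated at the disease-free steady state (N, 0, 0, 0, 0) has negative real part; in particular, every complex root of the cubic λ³ + (γ_I + γ_A + k + 3μ)λ² + [(k+μ)(γ_I+γ_A+2μ) + (γ_I+μ)(γ_A+μ) − Nk(β_I(1−q) + β_A q)]λ + (k+μ)(γ_I+μ)(γ_A+μ) − Nk(β_I(1−q)(γ_A+μ) + β_A q(γ_I+μ)) has negative real part. -/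
open Matrix Polynomial

lemma cubic_root_neg_re (a b c : ℝ) (ha : 0 < a) (hb : 0 < b) (hc : 0 < c)
    (hab : c < a * b) (z : ℂ)
    (hz : z ^ 3 + (a : ℂ) * z ^ 2 + (b : ℂ) * z + (c : ℂ) = 0) : z.re < 0 := by
  by_contra h
  push_neg at h
  set σ := z.re with hσ
  set τ := z.im with hτ
  have h1 := congrArg Complex.re hz
  have h2 := congrArg Complex.im hz
  simp only [pow_succ, pow_zero, one_mul, Complex.add_re, Complex.add_im, Complex.mul_re,
    Complex.mul_im, Complex.ofReal_re, Complex.ofReal_im, Complex.zero_re, Complex.zero_im,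
    ← hσ, ← hτ] at h1 h2
  have h2' : τ * (3 * σ ^ 2 - τ ^ 2 + 2 * a * σ + b) = 0 := by linear_combination h2
  rcases mul_eq_zero.mp h2' with hτ0 | hτ2
  · rw [hτ0] at h1
    nlinarith [mul_nonneg (mul_nonneg h h) h, mul_nonneg h h]
  · have hτ2' : τ ^ 2 = 3 * σ ^ 2 + 2 * a * σ + b := by linarith
    have key : c - a * b = 8 * σ ^ 3 + 8 * a * σ ^ 2 + 2 * (a ^ 2 + b) * σ := by
      linear_combination h1 + (3 * σ + a) * hτ2'
    nlinarith [mul_nonneg (mul_nonneg h h) h, mul_nonneg h h, mul_pos ha hb]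

lemma hasF_proj (i : Fin 5) (p : Fin 5 → ℝ) :
    HasFDerivAt (fun x : Fin 5 → ℝ => x i)
      (ContinuousLinearMap.proj (R := ℝ) (φ := fun _ : Fin 5 => ℝ) i) p :=
  hasFDerivAt_apply i p

set_option maxHeartbeats 2000000 in
set_option maxRecDepth 10000 in
/-- Local stability of the disease-free steady state: if `R₀ < 1`, every eigenvalue of the
Jacobian of the SEIAR system at `(N,0,0,0,0)` has negative real part; in particular every
complex root of the cubic factor of the characteristic polynomial has negative real part. -/
theorem seiar_dfe_locally_stable
    (N μ βI βA k γI γA q : ℝ)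
    (hN : 0 < N) (hμ : 0 < μ) (hβI : 0 < βI) (hβA : 0 < βA)
    (hk : 0 < k) (hγI : 0 < γI) (hγA : 0 < γA)
    (hq0 : 0 ≤ q) (hq1 : q ≤ 1)
    (R₀ : ℝ)
    (hR₀ : R₀ = βI * N * k * (1 - q) / ((k + μ) * (γI + μ))
              + βA * N * k * q / ((k + μ) * (γA + μ)))
    (hR₀lt : R₀ < 1)
    (F : (Fin 5 → ℝ) → Fin 5 → ℝ)
    (hF : F = fun x => ![μ * N - βI * x 0 * x 2 - βA * x 0 * x 3 - μ * x 0,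
                         βI * x 0 * x 2 + βA * x 0 * x 3 - (k + μ) * x 1,
                         k * (1 - q) * x 1 - (γI + μ) * x 2,
                         k * q * x 1 - (γA + μ) * x 3,
                         γI * x 2 + γA * x 3 - μ * x 4])
    (x₀ : Fin 5 → ℝ) (hx₀ : x₀ = ![N, 0, 0, 0, 0])
    (J : Matrix (Fin 5) (Fin 5) ℝ)
    (hJ : J = Matrix.of fun i j => fderiv ℝ (fun x => F x i) x₀ (Pi.single j 1)) :
    (∀ z : ℂ, z ∈ spectrum ℂ (J.map Complex.ofReal) → z.re < 0) ∧
    (∀ z : ℂ,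
      z ^ 3 + ((γI + γA + k + 3 * μ : ℝ) : ℂ) * z ^ 2
        + (((k + μ) * (γI + γA + 2 * μ) + (γI + μ) * (γA + μ)
            - N * k * (βI * (1 - q) + βA * q) : ℝ) : ℂ) * z
        + (((k + μ) * (γI + μ) * (γA + μ)
            - N * k * (βI * (1 - q) * (γA + μ) + βA * q * (γI + μ)) : ℝ) : ℂ) = 0 →
      z.re < 0) := by
  -- abbreviations
  have hp : 0 < k + μ := by linarith
  have hr : 0 < γI + μ := by linarith
  have hs : 0 < γA + μ := by linarith
  have h1q : 0 ≤ 1 - q := by linarith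
  have hT1nn : 0 ≤ βI * N * k * (1 - q) := by positivity
  have hT2nn : 0 ≤ βA * N * k * q := by positivity
  -- the main inequality from R₀ < 1
  have hmain : βI * N * k * (1 - q) * (γA + μ) + βA * N * k * q * (γI + μ)
      < (k + μ) * (γI + μ) * (γA + μ) := by
    rw [hR₀, div_add_div _ _ (by positivity) (by positivity),
      div_lt_one (by positivity)] at hR₀lt
    nlinarith [hR₀lt, hp, mul_pos hr hs]
  have hT1 : βI * N * k * (1 - q) < (k + μ) * (γI + μ) := by
    nlinarith [hmain, mul_nonneg hT2nn hr.le, hs]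
  have hT2 : βA * N * k * q < (k + μ) * (γA + μ) := by
    nlinarith [hmain, mul_nonneg hT1nn hs.le, hr]
  -- the three Routh–Hurwitz conditions
  have ha : (0:ℝ) < γI + γA + k + 3 * μ := by linarith
  have hb : (0:ℝ) < (k + μ) * (γI + γA + 2 * μ) + (γI + μ) * (γA + μ)
      - N * k * (βI * (1 - q) + βA * q) := by
    nlinarith [hT1, hT2, mul_pos hr hs]
  have hc : (0:ℝ) < (k + μ) * (γI + μ) * (γA + μ)
      - N * k * (βI * (1 - q) * (γA + μ) + βA * q * (γI + μ)) := by
    nlinarith [hmain]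
  have hab : (k + μ) * (γI + μ) * (γA + μ)
      - N * k * (βI * (1 - q) * (γA + μ) + βA * q * (γI + μ))
      < (γI + γA + k + 3 * μ) * ((k + μ) * (γI + γA + 2 * μ) + (γI + μ) * (γA + μ)
          - N * k * (βI * (1 - q) + βA * q)) := by
    nlinarith [mul_lt_mul_of_pos_right hT1 (add_pos hp hr),
      mul_lt_mul_of_pos_right hT2 (add_pos hp hs),
      mul_pos (mul_pos hr hr) hs, mul_pos (mul_pos hr hs) hs,
      mul_pos (mul_pos hp hr) hs]
  -- Part 2: roots of the cubic
  have part2 : ∀ z : ℂ,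
      z ^ 3 + ((γI + γA + k + 3 * μ : ℝ) : ℂ) * z ^ 2
        + (((k + μ) * (γI + γA + 2 * μ) + (γI + μ) * (γA + μ)
            - N * k * (βI * (1 - q) + βA * q) : ℝ) : ℂ) * z
        + (((k + μ) * (γI + μ) * (γA + μ)
            - N * k * (βI * (1 - q) * (γA + μ) + βA * q * (γI + μ)) : ℝ) : ℂ) = 0 →
      z.re < 0 := fun z hz => cubic_root_neg_re _ _ _ ha hb hc hab z hz
  -- the Jacobian explicitly
  have hJexp : J = Matrix.of ![![-μ, 0, -(βI*N), -(βA*N), 0],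
                    ![0, -(k+μ), βI*N, βA*N, 0],
                    ![0, k*(1-q), -(γI+μ), 0, 0],
                    ![0, k*q, 0, -(γA+μ), 0],
                    ![0, 0, γI, γA, -μ]] := by
    subst hF hx₀ hJ
    have H0 : HasFDerivAt (fun x : Fin 5 → ℝ => μ * N - βI * x 0 * x 2 - βA * x 0 * x 3 - μ * x 0)
        _ ![N,0,0,0,0] :=
      (((hasFDerivAt_const (μ*N) _).sub
        (((hasF_proj 0 _).const_mul βI).mul (hasF_proj 2 _))).sub
        (((hasF_proj 0 _).const_mul βA).mul (hasF_proj 3 _))).sub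
        ((hasF_proj 0 _).const_mul μ)
    have H1 : HasFDerivAt (fun x : Fin 5 → ℝ => βI * x 0 * x 2 + βA * x 0 * x 3 - (k+μ) * x 1)
        _ ![N,0,0,0,0] :=
      ((((hasF_proj 0 _).const_mul βI).mul (hasF_proj 2 _)).add
        (((hasF_proj 0 _).const_mul βA).mul (hasF_proj 3 _))).sub
        ((hasF_proj 1 _).const_mul (k+μ))
    have H2 : HasFDerivAt (fun x : Fin 5 → ℝ => k * (1-q) * x 1 - (γI+μ) * x 2)
        _ ![N,0,0,0,0] :=
      ((hasF_proj 1 _).const_mul (k*(1-q))).sub ((hasF_proj 2 _).const_mul (γI+μ))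
    have H3 : HasFDerivAt (fun x : Fin 5 → ℝ => k * q * x 1 - (γA+μ) * x 3)
        _ ![N,0,0,0,0] :=
      ((hasF_proj 1 _).const_mul (k*q)).sub ((hasF_proj 3 _).const_mul (γA+μ))
    have H4 : HasFDerivAt (fun x : Fin 5 → ℝ => γI * x 2 + γA * x 3 - μ * x 4)
        _ ![N,0,0,0,0] :=
      (((hasF_proj 2 _).const_mul γI).add ((hasF_proj 3 _).const_mul γA)).sub
        ((hasF_proj 4 _).const_mul μ)
    have row0 : ∀ j : Fin 5,
        fderiv ℝ (fun x : Fin 5 → ℝ => μ * N - βI * x 0 * x 2 - βA * x 0 * x 3 - μ * x 0)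
          ![N,0,0,0,0] (Pi.single j 1) = ![-μ, 0, -(βI*N), -(βA*N), 0] j := by
      intro j; rw [H0.fderiv]; fin_cases j <;> simp
    have row1 : ∀ j : Fin 5,
        fderiv ℝ (fun x : Fin 5 → ℝ => βI * x 0 * x 2 + βA * x 0 * x 3 - (k+μ) * x 1)
          ![N,0,0,0,0] (Pi.single j 1) = ![0, -(k+μ), βI*N, βA*N, 0] j := by
      intro j; rw [H1.fderiv]; fin_cases j <;> simp
    have row2 : ∀ j : Fin 5,
        fderiv ℝ (fun x : Fin 5 → ℝ => k * (1-q) * x 1 - (γI+μ) * x 2)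
          ![N,0,0,0,0] (Pi.single j 1) = ![0, k*(1-q), -(γI+μ), 0, 0] j := by
      intro j; rw [H2.fderiv]; fin_cases j <;> simp
    have row3 : ∀ j : Fin 5,
        fderiv ℝ (fun x : Fin 5 → ℝ => k * q * x 1 - (γA+μ) * x 3)
          ![N,0,0,0,0] (Pi.single j 1) = ![0, k*q, 0, -(γA+μ), 0] j := by
      intro j; rw [H3.fderiv]; fin_cases j <;> simp
    have row4 : ∀ j : Fin 5,
        fderiv ℝ (fun x : Fin 5 → ℝ => γI * x 2 + γA * x 3 - μ * x 4)
          ![N,0,0,0,0] (Pi.single j 1) = ![0, 0, γI, γA, -μ] j := by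
      intro j; rw [H4.fderiv]; fin_cases j <;> simp
    ext i j
    fin_cases i
    · exact row0 j
    · exact row1 j
    · exact row2 j
    · exact row3 j
    · exact row4 j
  -- Part 1
  refine ⟨fun z hz => ?_, part2⟩
  rw [hJexp, spectrum.mem_iff, Matrix.isUnit_iff_isUnit_det, isUnit_iff_ne_zero, not_not] at hz
  have hA : algebraMap ℂ (Matrix (Fin 5) (Fin 5) ℂ) z
      - (Matrix.of ![![-μ, 0, -(βI*N), -(βA*N), 0],
                    ![0, -(k+μ), βI*N, βA*N, 0],
                    ![0, k*(1-q), -(γI+μ), 0, 0],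
                    ![0, k*q, 0, -(γA+μ), 0],
                    ![0, 0, γI, γA, -μ]]).map Complex.ofReal
      = Matrix.of ![![z+μ, 0, (βI*N : ℝ), (βA*N : ℝ), 0],
                    ![0, z+(k+μ:ℝ), -(βI*N:ℝ), -(βA*N:ℝ), 0],
                    ![0, -(k*(1-q):ℝ), z+(γI+μ:ℝ), 0, 0],
                    ![0, -(k*q:ℝ), 0, z+(γA+μ:ℝ), 0],
                    ![0, 0, -(γI:ℝ), -(γA:ℝ), z+(μ:ℝ)]] := by
    ext i j
    fin_cases i <;> fin_cases j <;>
      simp [Matrix.algebraMap_matrix_apply, Matrix.map_apply, Matrix.vecHead, Matrix.vecTail] <;>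
      push_cast <;> ring
  rw [hA] at hz
  have hdet : (z + (μ:ℂ))^2 * (z ^ 3 + ((γI + γA + k + 3 * μ : ℝ) : ℂ) * z ^ 2
        + (((k + μ) * (γI + γA + 2 * μ) + (γI + μ) * (γA + μ)
            - N * k * (βI * (1 - q) + βA * q) : ℝ) : ℂ) * z
        + (((k + μ) * (γI + μ) * (γA + μ)
            - N * k * (βI * (1 - q) * (γA + μ) + βA * q * (γI + μ)) : ℝ) : ℂ)) = 0 := by
    rw [← hz]
    simp only [Matrix.det_succ_row_zero, Fin.sum_univ_succ, Fin.sum_univ_zero,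
      Matrix.submatrix_apply, Matrix.of_apply, Matrix.cons_val', Matrix.cons_val_zero,
      Matrix.cons_val_one, Matrix.head_cons, Matrix.head_fin_const, Matrix.empty_val',
      Matrix.cons_val_fin_one, Fin.succ_zero_eq_one, Fin.succAbove_zero]
    norm_num [Fin.succAbove, Fin.lt_def, Matrix.vecHead, Matrix.vecTail, Function.comp,
      Fin.castSucc, Fin.castAdd, Fin.castLE, Matrix.cons_val_zero, Matrix.cons_val_one,
      Matrix.cons_val_succ]
    push_cast
    ring
  rcases mul_eq_zero.mp hdet with h0 | h0
  · have : z = -(μ:ℂ) := by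
      have := pow_eq_zero_iff (n := 2) (by norm_num) |>.mp h0
      linear_combination this
    rw [this]
    simp [hμ]
  · exact part2 z h0
end

section
/- If R₀ > 1, then the point (S*, E*, I*, A*, R*) with S* = N/R₀, E* = (Nμ/(k+μ))(1 − 1/R₀), I* = (Nk(1−q)μ/((γ_I+μ)(k+μ)))(1 − 1/R₀), A* = (Nkqμ/((γ_A+μ)(k+μ)))(1 − 1/R₀), R* = (Nk(qγ_Aμ + γ_I(γ_A + μ − qμ))/((γ_I+μ)(γ_A+μ)(k+μ)))(1 − 1/R₀) is an equilibrium of the SEIAR system (all right-hand sides vanish at this point), all of whose components S*, E*, R* are positive, with I* positive when q < 1 and A* positive when q > 0. Moreover it is the unique equilibrium of the SEIAR system with E > 0. -/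
/-- If `R₀ > 1`, the endemic point `(S*, E*, I*, A*, R*)` is an equilibrium of the SEIAR
system, with `S*, E*, R*` positive, `I*` positive when `q < 1`, `A*` positive when `q > 0`;
moreover it is the unique equilibrium with `E > 0`. -/
theorem seiar_endemic_equilibrium
    (N μ βI βA k γI γA q : ℝ)
    (hN : 0 < N) (hμ : 0 < μ) (hβI : 0 < βI) (hβA : 0 < βA)
    (hk : 0 < k) (hγI : 0 < γI) (hγA : 0 < γA)
    (hq0 : 0 ≤ q) (hq1 : q ≤ 1)
    (R₀ : ℝ)
    (hR₀ : R₀ = βI * N * k * (1 - q) / ((k + μ) * (γI + μ))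
              + βA * N * k * q / ((k + μ) * (γA + μ)))
    (hR₀gt : 1 < R₀)
    (Sstar Estar Istar Astar Rstar : ℝ)
    (hSstar : Sstar = N / R₀)
    (hEstar : Estar = N * μ / (k + μ) * (1 - 1 / R₀))
    (hIstar : Istar = N * k * (1 - q) * μ / ((γI + μ) * (k + μ)) * (1 - 1 / R₀))
    (hAstar : Astar = N * k * q * μ / ((γA + μ) * (k + μ)) * (1 - 1 / R₀))
    (hRstar : Rstar = N * k * (q * γA * μ + γI * (γA + μ - q * μ))
        / ((γI + μ) * (γA + μ) * (k + μ)) * (1 - 1 / R₀)) :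
    (μ * N - βI * Sstar * Istar - βA * Sstar * Astar - μ * Sstar = 0 ∧
     βI * Sstar * Istar + βA * Sstar * Astar - (k + μ) * Estar = 0 ∧
     k * (1 - q) * Estar - (γI + μ) * Istar = 0 ∧
     k * q * Estar - (γA + μ) * Astar = 0 ∧
     γI * Istar + γA * Astar - μ * Rstar = 0) ∧
    (0 < Sstar ∧ 0 < Estar ∧ 0 < Rstar) ∧
    (q < 1 → 0 < Istar) ∧
    (0 < q → 0 < Astar) ∧
    (∀ S E I A R : ℝ,
      μ * N - βI * S * I - βA * S * A - μ * S = 0 →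
      βI * S * I + βA * S * A - (k + μ) * E = 0 →
      k * (1 - q) * E - (γI + μ) * I = 0 →
      k * q * E - (γA + μ) * A = 0 →
      γI * I + γA * A - μ * R = 0 →
      0 < E →
      S = Sstar ∧ E = Estar ∧ I = Istar ∧ A = Astar ∧ R = Rstar) := by
  have hkμ : (0:ℝ) < k + μ := by linarith
  have hγIμ : (0:ℝ) < γI + μ := by linarith
  have hγAμ : (0:ℝ) < γA + μ := by linarith
  have hR0pos : (0:ℝ) < R₀ := by linarith
  have hR0ne : R₀ ≠ 0 := ne_of_gt hR0pos
  have hNne : N ≠ 0 := ne_of_gt hN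
  have hμne : μ ≠ 0 := ne_of_gt hμ
  have hkμne : k + μ ≠ 0 := ne_of_gt hkμ
  have hγIμne : γI + μ ≠ 0 := ne_of_gt hγIμ
  have hγAμne : γA + μ ≠ 0 := ne_of_gt hγAμ
  have h1 : 0 < 1 - 1 / R₀ := by
    have : 1 / R₀ < 1 := by rw [div_lt_one hR0pos]; exact hR₀gt
    linarith
  have hpoly : R₀ * ((k + μ) * (γI + μ) * (γA + μ))
      = βI * N * k * (1 - q) * (γA + μ) + βA * N * k * q * (γI + μ) := by
    rw [hR₀]; field_simp
  -- cleared-denominator forms of the starred quantities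
  have hS' : Sstar * R₀ = N := by rw [hSstar]; field_simp
  have hE' : Estar * ((k + μ) * R₀) = N * μ * (R₀ - 1) := by
    rw [hEstar]; field_simp
  have hI' : Istar * ((γI + μ) * (k + μ) * R₀) = N * k * (1 - q) * μ * (R₀ - 1) := by
    rw [hIstar]; field_simp
  have hA' : Astar * ((γA + μ) * (k + μ) * R₀) = N * k * q * μ * (R₀ - 1) := by
    rw [hAstar]; field_simp
  have hR' : Rstar * ((γI + μ) * (γA + μ) * (k + μ) * R₀)
      = N * k * (q * γA * μ + γI * (γA + μ - q * μ)) * (R₀ - 1) := by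
    rw [hRstar]; field_simp
  have hDne : ((k + μ) * (γI + μ) * (γA + μ) * R₀) ≠ 0 := by positivity
  have hkey : βI * Istar + βA * Astar = μ * (R₀ - 1) := by
    apply mul_right_cancel₀ hDne
    linear_combination βI * (γA + μ) * hI' + βA * (γI + μ) * hA' - μ * (R₀ - 1) * hpoly
  have heq1 : μ * N - βI * Sstar * Istar - βA * Sstar * Astar - μ * Sstar = 0 := by
    apply mul_right_cancel₀ hR0ne
    rw [zero_mul]
    linear_combination (-(Sstar * R₀)) * hkey + (-(μ * (R₀ - 1))) * hS' - μ * hS'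
  have heq2 : βI * Sstar * Istar + βA * Sstar * Astar - (k + μ) * Estar = 0 := by
    apply mul_right_cancel₀ hR0ne
    rw [zero_mul]
    linear_combination (Sstar * R₀) * hkey + (μ * (R₀ - 1)) * hS' - hE'
  have heq3 : k * (1 - q) * Estar - (γI + μ) * Istar = 0 := by
    apply mul_right_cancel₀ (mul_ne_zero hkμne hR0ne)
    rw [zero_mul]
    linear_combination k * (1 - q) * hE' - hI'
  have heq4 : k * q * Estar - (γA + μ) * Astar = 0 := by
    apply mul_right_cancel₀ (mul_ne_zero hkμne hR0ne)
    rw [zero_mul]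
    linear_combination k * q * hE' - hA'
  have heq5 : γI * Istar + γA * Astar - μ * Rstar = 0 := by
    apply mul_right_cancel₀ hDne
    rw [zero_mul]
    linear_combination γI * (γA + μ) * hI' + γA * (γI + μ) * hA' - μ * hR'
  refine ⟨⟨heq1, heq2, heq3, heq4, heq5⟩, ⟨?_, ?_, ?_⟩, ?_, ?_, ?_⟩
  · rw [hSstar]; positivity
  · rw [hEstar]; positivity
  · rw [hRstar]
    have hqμ : q * μ ≤ 1 * μ := mul_le_mul_of_nonneg_right hq1 hμ.le
    rw [one_mul] at hqμ
    have hnum : 0 < q * γA * μ + γI * (γA + μ - q * μ) := by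
      have h2 : 0 < γA + μ - q * μ := by linarith
      have h3 : 0 ≤ q * γA * μ := by positivity
      have h4 : 0 < γI * (γA + μ - q * μ) := mul_pos hγI h2
      linarith
    positivity
  · intro hq; rw [hIstar]
    have : 0 < 1 - q := by linarith
    positivity
  · intro hq; rw [hAstar]; positivity
  · intro S E I A R e1 e2 e3 e4 e5 hE
    have eI : I * (γI + μ) = k * (1 - q) * E := by linarith
    have eA : A * (γA + μ) = k * q * E := by linarith
    have hSR : S * R₀ = N := by
      have hc : (S * R₀ - N) * ((k + μ) * E * (γI + μ) * (γA + μ) * N) = 0 := by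
        linear_combination (E * S * N) * hpoly - βI * S * N ^ 2 * (γA + μ) * eI
          - βA * S * N ^ 2 * (γI + μ) * eA + N ^ 2 * (γI + μ) * (γA + μ) * e2
      have hpos : ((k + μ) * E * (γI + μ) * (γA + μ) * N) ≠ 0 := by positivity
      have h0 := (mul_eq_zero.mp hc).resolve_right hpos
      exact sub_eq_zero.mp h0
    have hE2 : E * ((k + μ) * R₀) = N * μ * (R₀ - 1) := by
      linear_combination (-R₀) * e1 + (-R₀) * e2 + (-μ) * hSR
    have hEe : E = Estar :=
      mul_right_cancel₀ (mul_ne_zero hkμne hR0ne) (hE2.trans hE'.symm)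
    have hIe : I = Istar := by
      apply mul_right_cancel₀ (show (γI + μ) * (k + μ) * R₀ ≠ 0 by positivity)
      rw [hI']
      linear_combination ((k + μ) * R₀) * eI + k * (1 - q) * hE2
    have hAe : A = Astar := by
      apply mul_right_cancel₀ (show (γA + μ) * (k + μ) * R₀ ≠ 0 by positivity)
      rw [hA']
      linear_combination ((k + μ) * R₀) * eA + k * q * hE2
    have hSe : S = Sstar := by
      rw [hSstar, eq_div_iff hR0ne]; exact hSR
    have hRe : R = Rstar := by
      apply mul_left_cancel₀ hμne
      rw [hIe, hAe] at e5
      linarith [heq5]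
    exact ⟨hSe, hEe, hIe, hAe, hRe⟩
end

section
/- (Theorem 2, local stability of the endemic steady state.) If R₀ > 1, then every eigenvalue of the Jacobian matrix of the SEIAR system evaluated at the endemic steady state (S*, E*, I*, A*, R*) has negative real part, where S* = N/R₀, E* = (Nμ/(k+μ))(1 − 1/R₀), I* = (Nk(1−q)μ/((γ_I+μ)(k+μ)))(1 − 1/R₀), A* = (Nkqμ/((γ_A+μ)(k+μ)))(1 − 1/R₀), R* = (Nk(qγ_Aμ + γ_I(γ_A + μ − qμ))/((γ_I+μ)(γ_A+μ)(k+μ)))(1 − 1/R₀). -/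
set_option maxHeartbeats 2000000
set_option maxRecDepth 100000

open Matrix Polynomial

noncomputable def Pproj (j : Fin 5) : (Fin 5 → ℝ) →L[ℝ] ℝ := ContinuousLinearMap.proj j

lemma Pproj_apply (i j : Fin 5) : Pproj i (Pi.single j 1) = if i = j then 1 else 0 := by
  simp [Pproj, Pi.single_apply, eq_comm]

lemma seiar_aux (μ k γI γA c a0 a1 kI kA : ℝ)
    (hμ : 0 < μ) (hk : 0 < k) (hγI : 0 < γI) (hγA : 0 < γA)
    (hc : 0 < c) (ha0 : 0 < a0) (ha1 : 0 < a1)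
    (hkI : 0 ≤ kI) (hkA : 0 ≤ kA) (hkk : kI + kA = k)
    (heq : kI * a0 * (γA + μ) + kA * a1 * (γI + μ) = (k + μ) * (γI + μ) * (γA + μ))
    (z : ℂ)
    (hz : z ∈ spectrum ℂ ((!![-(c + μ), 0, -a0, -a1, 0;
            c, -(k + μ), a0, a1, 0;
            0, kI, -(γI + μ), 0, 0;
            0, kA, 0, -(γA + μ), 0;
            0, 0, γI, γA, -μ] : Matrix (Fin 5) (Fin 5) ℝ).map Complex.ofReal)) :
    z.re < 0 := by
  by_contra hre
  push_neg at hre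
  -- extract eigenvector
  rw [spectrum.mem_iff] at hz
  set M : Matrix (Fin 5) (Fin 5) ℂ := (!![-(c + μ), 0, -a0, -a1, 0;
            c, -(k + μ), a0, a1, 0;
            0, kI, -(γI + μ), 0, 0;
            0, kA, 0, -(γA + μ), 0;
            0, 0, γI, γA, -μ] : Matrix (Fin 5) (Fin 5) ℝ).map Complex.ofReal with hM
  have hdet : (algebraMap ℂ (Matrix (Fin 5) (Fin 5) ℂ) z - M).det = 0 := by
    by_contra h
    exact hz ((Matrix.isUnit_iff_isUnit_det _).2 (isUnit_iff_ne_zero.2 h))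
  obtain ⟨v, hv0, hveq⟩ := Matrix.exists_mulVec_eq_zero_iff.2 hdet
  have hMv : M.mulVec v = z • v := by
    have h1 : (algebraMap ℂ (Matrix (Fin 5) (Fin 5) ℂ) z - M).mulVec v
        = z • v - M.mulVec v := by
      rw [Matrix.sub_mulVec, Algebra.algebraMap_eq_smul_one, Matrix.smul_mulVec,
        Matrix.one_mulVec]
    rw [h1] at hveq
    linear_combination (norm := module) -hveq
  have E0 := congrFun hMv 0
  have E1 := congrFun hMv 1
  have E2 := congrFun hMv 2
  have E3 := congrFun hMv 3
  have E4 := congrFun hMv 4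
  simp [hM, Matrix.mulVec, dotProduct, Fin.sum_univ_five, Matrix.map_apply,
    Matrix.vecHead, Matrix.vecTail] at E0 E1 E2 E3 E4
  have hne : ∀ w : ℝ, 0 < w → z + (w : ℂ) ≠ 0 := by
    intro w hw h
    have h2 := congrArg Complex.re h
    simp at h2
    linarith
  set s := v 0 with hs; set e := v 1 with he'; set ii := v 2 with hii'
  set aa := v 3 with haa'; set r := v 4 with hr'
  set dI : ℂ := z + (γI : ℂ) + (μ : ℂ) with hdI
  set dA : ℂ := z + (γA : ℂ) + (μ : ℂ) with hdA
  set dm : ℂ := z + (μ : ℂ) with hdm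
  set dC : ℂ := z + (c : ℂ) + (μ : ℂ) with hdC
  set dK : ℂ := z + (k : ℂ) + (μ : ℂ) with hdK
  have hdIne : dI ≠ 0 := by
    intro h; apply hne (γI + μ) (by linarith); rw [← h, hdI]; push_cast; ring
  have hdAne : dA ≠ 0 := by
    intro h; apply hne (γA + μ) (by linarith); rw [← h, hdA]; push_cast; ring
  have hdmne : dm ≠ 0 := hne μ hμ
  have F2 : dI * ii = (kI : ℂ) * e := by rw [hdI]; linear_combination -E2
  have F3 : dA * aa = (kA : ℂ) * e := by rw [hdA]; linear_combination -E3
  have F0 : dC * s = -((a0 : ℂ) * ii + (a1 : ℂ) * aa) := by rw [hdC]; linear_combination -E0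
  have F1 : dK * e = (c : ℂ) * s + (a0 : ℂ) * ii + (a1 : ℂ) * aa := by
    rw [hdK]; linear_combination -E1
  have F4 : dm * r = (γI : ℂ) * ii + (γA : ℂ) * aa := by rw [hdm]; linear_combination -E4
  rcases eq_or_ne e 0 with he | he
  · -- eigenvector vanishes, contradiction
    have hii0 : ii = 0 := by
      rcases mul_eq_zero.mp (by rw [F2, he, mul_zero] : dI * ii = 0) with h | h
      · exact absurd h hdIne
      · exact h
    have haa0 : aa = 0 := by
      rcases mul_eq_zero.mp (by rw [F3, he, mul_zero] : dA * aa = 0) with h | h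
      · exact absurd h hdAne
      · exact h
    have hs0 : s = 0 := by
      have h1 : (c : ℂ) * s = 0 := by
        have := F1; rw [he, hii0, haa0] at this; simpa using this.symm
      rcases mul_eq_zero.mp h1 with h | h
      · exact absurd h (Complex.ofReal_ne_zero.mpr hc.ne')
      · exact h
    have hr0 : r = 0 := by
      have h1 : dm * r = 0 := by rw [F4, hii0, haa0]; ring
      rcases mul_eq_zero.mp h1 with h | h
      · exact absurd h hdmne
      · exact h
    apply hv0
    funext j
    fin_cases j
    · exact hs0
    · exact he
    · exact hii0
    · exact haa0
    · exact hr0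
  · -- key identity
    have key : dK * dC * dI * dA = ((kI : ℂ) * (a0 : ℂ) * dA + (kA : ℂ) * (a1 : ℂ) * dI) * dm := by
      have big : dK * dC * dI * dA * e
          = (((kI : ℂ) * (a0 : ℂ) * dA + (kA : ℂ) * (a1 : ℂ) * dI) * dm) * e := by
        rw [hdK, hdC, hdI, hdA, hdm]
        linear_combination ((z + (c:ℂ) + μ) * (z + (γI:ℂ) + μ) * (z + (γA:ℂ) + μ)) * F1
          + ((c:ℂ) * (z + (γI:ℂ) + μ) * (z + (γA:ℂ) + μ)) * F0
          + ((a0:ℂ) * (z + (μ:ℂ)) * (z + (γA:ℂ) + μ)) * F2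
          + ((a1:ℂ) * (z + (μ:ℂ)) * (z + (γI:ℂ) + μ)) * F3
      exact mul_right_cancel₀ he big
    -- absolute value estimates
    set B := ‖dm‖ with hB
    set C' := ‖dC‖ with hC'
    set K' := ‖dK‖ with hK'
    set A2 := ‖dI‖ with hA2'
    set A3 := ‖dA‖ with hA3'
    have hA2 : γI + μ ≤ A2 := by
      have h1 : dI.re ≤ A2 := Complex.re_le_norm dI
      have h2 : dI.re = z.re + γI + μ := by rw [hdI]; simp
      linarith
    have hA3 : γA + μ ≤ A3 := by
      have h1 : dA.re ≤ A3 := Complex.re_le_norm dA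
      have h2 : dA.re = z.re + γA + μ := by rw [hdA]; simp
      linarith
    have hKb : k + μ ≤ K' := by
      have h1 : dK.re ≤ K' := Complex.re_le_norm dK
      have h2 : dK.re = z.re + k + μ := by rw [hdK]; simp
      linarith
    have hBpos : 0 < B := norm_pos_iff.mpr hdmne
    have hBC : B < C' := by
      have hsq : B ^ 2 < C' ^ 2 := by
        rw [hB, hC', Complex.sq_norm, Complex.sq_norm, Complex.normSq_apply, Complex.normSq_apply,
          hdm, hdC]
        simp
        nlinarith [hre, hc, hμ]
      nlinarith [norm_nonneg dm, norm_nonneg dC]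
    -- bound |RHS| ≤ S * B
    have habsle : K' * C' * A2 * A3 ≤ (kI * a0 * A3 + kA * a1 * A2) * B := by
      have h1 : ‖dK * dC * dI * dA‖
          = ‖((kI : ℂ) * (a0 : ℂ) * dA + (kA : ℂ) * (a1 : ℂ) * dI) * dm‖ := by
        rw [key]
      have h2 : ‖dK * dC * dI * dA‖ = K' * C' * A2 * A3 := by
        simp [_root_.map_mul]
        rfl
      have h3 : ‖((kI : ℂ) * (a0 : ℂ) * dA + (kA : ℂ) * (a1 : ℂ) * dI) * dm‖
          ≤ (kI * a0 * A3 + kA * a1 * A2) * B := by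
        rw [norm_mul]
        apply mul_le_mul_of_nonneg_right _ (norm_nonneg dm)
        calc ‖(kI : ℂ) * (a0 : ℂ) * dA + (kA : ℂ) * (a1 : ℂ) * dI‖
            ≤ ‖(kI : ℂ) * (a0 : ℂ) * dA‖ + ‖(kA : ℂ) * (a1 : ℂ) * dI‖ :=
              norm_add_le _ _
          _ = kI * a0 * A3 + kA * a1 * A2 := by
              rw [norm_mul, norm_mul, norm_mul, norm_mul, Complex.norm_real, Complex.norm_real,
                Complex.norm_real, Complex.norm_real, Real.norm_eq_abs, Real.norm_eq_abs, Real.norm_eq_abs, Real.norm_eq_abs, abs_of_nonneg hkI, abs_of_nonneg hkA,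
                abs_of_nonneg ha0.le, abs_of_nonneg ha1.le]
      rw [h2] at h1
      linarith [h1, h3]
    -- positivity of S
    have hA2pos : 0 < A2 := lt_of_lt_of_le (by linarith) hA2
    have hA3pos : 0 < A3 := lt_of_lt_of_le (by linarith) hA3
    have hSpos : 0 < kI * a0 * A3 + kA * a1 * A2 := by
      rcases hkI.eq_or_lt with h | h
      · have hkA' : kA = k := by linarith
        have : 0 < kA * a1 * A2 := by rw [hkA']; positivity
        nlinarith [mul_nonneg (mul_nonneg hkI ha0.le) hA3pos.le]
      · have h1 : 0 < kI * a0 * A3 := by positivity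
        nlinarith [mul_nonneg (mul_nonneg hkA ha1.le) hA2pos.le]
    -- S ≤ (k+μ) * A2 * A3
    have hSle : kI * a0 * A3 + kA * a1 * A2 ≤ (k + μ) * A2 * A3 := by
      have h1 : kI * a0 * (γA + μ) * A3 * (γI + μ) ≤ kI * a0 * (γA + μ) * A3 * A2 :=
        mul_le_mul_of_nonneg_left hA2 (by positivity)
      have h2 : kA * a1 * (γI + μ) * A2 * (γA + μ) ≤ kA * a1 * (γI + μ) * A2 * A3 :=
        mul_le_mul_of_nonneg_left hA3 (by positivity)
      have hpos : 0 < (γI + μ) * (γA + μ) := by positivity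
      have h3 : (kI * a0 * (γA + μ) + kA * a1 * (γI + μ)) * (A2 * A3)
          = ((k + μ) * (γI + μ) * (γA + μ)) * (A2 * A3) := by rw [heq]
      nlinarith [h1, h2, h3, hpos]
    -- contradiction chain
    have c1 : (kI * a0 * A3 + kA * a1 * A2) * B < (kI * a0 * A3 + kA * a1 * A2) * C' :=
      mul_lt_mul_of_pos_left hBC hSpos
    have c2 : (kI * a0 * A3 + kA * a1 * A2) * C' ≤ (k + μ) * A2 * A3 * C' := by
      have hC'pos : 0 < C' := lt_trans hBpos hBC
      exact mul_le_mul_of_nonneg_right hSle hC'pos.le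
    have c3 : (k + μ) * A2 * A3 * C' ≤ K' * A2 * A3 * C' := by
      have : (0:ℝ) ≤ A2 * A3 * C' := by positivity
      nlinarith [hKb]
    nlinarith [habsle, c1, c2, c3]


/-- Local stability of the endemic steady state: if `R₀ > 1`, every eigenvalue of the
Jacobian of the SEIAR system at the endemic steady state `(S*, E*, I*, A*, R*)` has
negative real part. -/
theorem seiar_endemic_locally_stable
    (N μ βI βA k γI γA q : ℝ)
    (hN : 0 < N) (hμ : 0 < μ) (hβI : 0 < βI) (hβA : 0 < βA)
    (hk : 0 < k) (hγI : 0 < γI) (hγA : 0 < γA)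
    (hq0 : 0 ≤ q) (hq1 : q ≤ 1)
    (R₀ : ℝ)
    (hR₀ : R₀ = βI * N * k * (1 - q) / ((k + μ) * (γI + μ))
              + βA * N * k * q / ((k + μ) * (γA + μ)))
    (hR₀gt : 1 < R₀)
    (Sstar Estar Istar Astar Rstar : ℝ)
    (hSstar : Sstar = N / R₀)
    (hEstar : Estar = N * μ / (k + μ) * (1 - 1 / R₀))
    (hIstar : Istar = N * k * (1 - q) * μ / ((γI + μ) * (k + μ)) * (1 - 1 / R₀))
    (hAstar : Astar = N * k * q * μ / ((γA + μ) * (k + μ)) * (1 - 1 / R₀))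
    (hRstar : Rstar = N * k * (q * γA * μ + γI * (γA + μ - q * μ))
        / ((γI + μ) * (γA + μ) * (k + μ)) * (1 - 1 / R₀))
    (F : (Fin 5 → ℝ) → Fin 5 → ℝ)
    (hF : F = fun x => ![μ * N - βI * x 0 * x 2 - βA * x 0 * x 3 - μ * x 0,
                         βI * x 0 * x 2 + βA * x 0 * x 3 - (k + μ) * x 1,
                         k * (1 - q) * x 1 - (γI + μ) * x 2,
                         k * q * x 1 - (γA + μ) * x 3,
                         γI * x 2 + γA * x 3 - μ * x 4])
    (x₀ : Fin 5 → ℝ) (hx₀ : x₀ = ![Sstar, Estar, Istar, Astar, Rstar])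
    (J : Matrix (Fin 5) (Fin 5) ℝ)
    (hJ : J = Matrix.of fun i j => fderiv ℝ (fun x => F x i) x₀ (Pi.single j 1)) :
    ∀ z : ℂ, z ∈ spectrum ℂ (J.map Complex.ofReal) → z.re < 0 := by
  intro z hz
  have hR0pos : 0 < R₀ := lt_trans one_pos hR₀gt
  have hR0ne : R₀ ≠ 0 := hR0pos.ne'
  have hfrac : 0 < 1 - 1 / R₀ := by
    have h1 : 1 / R₀ < 1 := by rw [div_lt_one hR0pos]; exact hR₀gt
    linarith
  have hSpos : 0 < Sstar := by rw [hSstar]; positivity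
  have h1q : 0 ≤ 1 - q := by linarith
  have hIge : 0 ≤ Istar := by
    rw [hIstar]
    have hnum : 0 ≤ N * k * (1 - q) * μ := by
      exact mul_nonneg (mul_nonneg (mul_nonneg hN.le hk.le) h1q) hμ.le
    exact mul_nonneg (div_nonneg hnum (by positivity)) hfrac.le
  have hAge : 0 ≤ Astar := by
    rw [hAstar]
    have hnum : 0 ≤ N * k * q * μ := by positivity
    exact mul_nonneg (div_nonneg hnum (by positivity)) hfrac.le
  have hc : 0 < βI * Istar + βA * Astar := by
    rcases lt_or_eq_of_le hq1 with hq | hq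
    · have hIpos : 0 < Istar := by
        rw [hIstar]
        have h1q' : 0 < 1 - q := by linarith
        have hnum : 0 < N * k * (1 - q) * μ := by positivity
        exact mul_pos (div_pos hnum (by positivity)) hfrac
      nlinarith [mul_pos hβI hIpos, mul_nonneg hβA.le hAge]
    · have hq0' : 0 < q := by linarith
      have hApos : 0 < Astar := by
        rw [hAstar]
        have hnum : 0 < N * k * q * μ := by positivity
        exact mul_pos (div_pos hnum (by positivity)) hfrac
      nlinarith [mul_pos hβA hApos, mul_nonneg hβI.le hIge]
  have heq : k * (1 - q) * (βI * Sstar) * (γA + μ) + k * q * (βA * Sstar) * (γI + μ)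
      = (k + μ) * (γI + μ) * (γA + μ) := by
    rw [hSstar]
    have hkμ : (k + μ) ≠ 0 := by positivity
    have hγIμ : (γI + μ) ≠ 0 := by positivity
    have hγAμ : (γA + μ) ≠ 0 := by positivity
    have hNid : βI * N * k * (1 - q) * (γA + μ) + βA * N * k * q * (γI + μ)
        = R₀ * ((k + μ) * (γI + μ) * (γA + μ)) := by
      rw [hR₀]; field_simp
    field_simp
    linear_combination hNid
  -- compute the Jacobian explicitly
  have e0 : (fun x : Fin 5 → ℝ => F x 0) = fun x => μ * N - βI * x 0 * x 2 - βA * x 0 * x 3 - μ * x 0 := by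
    funext x; simp [hF]
  have e1 : (fun x : Fin 5 → ℝ => F x 1) = fun x => βI * x 0 * x 2 + βA * x 0 * x 3 - (k + μ) * x 1 := by
    funext x; simp [hF]
  have e2 : (fun x : Fin 5 → ℝ => F x 2) = fun x => k * (1 - q) * x 1 - (γI + μ) * x 2 := by
    funext x; simp [hF]
  have e3 : (fun x : Fin 5 → ℝ => F x 3) = fun x => k * q * x 1 - (γA + μ) * x 3 := by
    funext x; simp [hF]
  have e4 : (fun x : Fin 5 → ℝ => F x 4) = fun x => γI * x 2 + γA * x 3 - μ * x 4 := by
    funext x; simp [hF]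
  have hv0 : x₀ 0 = Sstar := by rw [hx₀]; rfl
  have hv1 : x₀ 1 = Estar := by rw [hx₀]; rfl
  have hv2 : x₀ 2 = Istar := by rw [hx₀]; rfl
  have hv3 : x₀ 3 = Astar := by rw [hx₀]; rfl
  have hv4 : x₀ 4 = Rstar := by rw [hx₀]; rfl
  have d0 : fderiv ℝ (fun x => F x 0) x₀ =
      (0 : (Fin 5 → ℝ) →L[ℝ] ℝ) - ((βI * Sstar) • Pproj 2 + Istar • (βI • Pproj 0))
        - ((βA * Sstar) • Pproj 3 + Astar • (βA • Pproj 0)) - μ • Pproj 0 := by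
    rw [e0, ← hv0, ← hv2, ← hv3]
    exact ((((hasFDerivAt_const (μ*N) x₀).sub
      ((((Pproj 0).hasFDerivAt).const_mul βI).mul ((Pproj 2).hasFDerivAt))).sub
      ((((Pproj 0).hasFDerivAt).const_mul βA).mul ((Pproj 3).hasFDerivAt))).sub
      (((Pproj 0).hasFDerivAt).const_mul μ)).fderiv
  have d1 : fderiv ℝ (fun x => F x 1) x₀ =
      (((βI * Sstar) • Pproj 2 + Istar • (βI • Pproj 0)) + ((βA * Sstar) • Pproj 3 + Astar • (βA • Pproj 0)))
        - (k + μ) • Pproj 1 := by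
    rw [e1, ← hv0, ← hv2, ← hv3]
    exact ((((((Pproj 0).hasFDerivAt).const_mul βI).mul ((Pproj 2).hasFDerivAt)).add
      ((((Pproj 0).hasFDerivAt).const_mul βA).mul ((Pproj 3).hasFDerivAt))).sub
      (((Pproj 1).hasFDerivAt).const_mul (k + μ))).fderiv
  have d2 : fderiv ℝ (fun x => F x 2) x₀ = (k * (1 - q)) • Pproj 1 - (γI + μ) • Pproj 2 := by
    rw [e2]
    exact ((((Pproj 1).hasFDerivAt).const_mul (k * (1 - q))).sub
      (((Pproj 2).hasFDerivAt).const_mul (γI + μ))).fderiv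
  have d3 : fderiv ℝ (fun x => F x 3) x₀ = (k * q) • Pproj 1 - (γA + μ) • Pproj 3 := by
    rw [e3]
    exact ((((Pproj 1).hasFDerivAt).const_mul (k * q)).sub
      (((Pproj 3).hasFDerivAt).const_mul (γA + μ))).fderiv
  have d4 : fderiv ℝ (fun x => F x 4) x₀ = γI • Pproj 2 + γA • Pproj 3 - μ • Pproj 4 := by
    rw [e4]
    exact (((((Pproj 2).hasFDerivAt).const_mul γI).add
      (((Pproj 3).hasFDerivAt).const_mul γA)).sub (((Pproj 4).hasFDerivAt).const_mul μ)).fderiv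
  have hJmat : J = !![-(βI * Istar + βA * Astar + μ), 0, -(βI * Sstar), -(βA * Sstar), 0;
           βI * Istar + βA * Astar, -(k + μ), βI * Sstar, βA * Sstar, 0;
           0, k * (1 - q), -(γI + μ), 0, 0;
           0, k * q, 0, -(γA + μ), 0;
           0, 0, γI, γA, -μ] := by
    subst hJ
    ext i j
    fin_cases i <;> fin_cases j <;>
    simp only [Matrix.of_apply, show (⟨0, by omega⟩ : Fin 5) = 0 from rfl,
      show (⟨1, by omega⟩ : Fin 5) = 1 from rfl, show (⟨2, by omega⟩ : Fin 5) = 2 from rfl,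
      show (⟨3, by omega⟩ : Fin 5) = 3 from rfl, show (⟨4, by omega⟩ : Fin 5) = 4 from rfl,
      d0, d1, d2, d3, d4,
      ContinuousLinearMap.sub_apply, ContinuousLinearMap.add_apply,
      ContinuousLinearMap.smul_apply, ContinuousLinearMap.zero_apply, Pproj_apply,
      smul_eq_mul, Fin.reduceEq, if_true, if_false, reduceIte] <;>
    simp [Matrix.vecHead, Matrix.vecTail] <;> ring
  rw [hJmat] at hz
  exact seiar_aux μ k γI γA (βI * Istar + βA * Astar) (βI * Sstar) (βA * Sstar)
    (k * (1 - q)) (k * q) hμ hk hγI hγA hc (by positivity) (by positivity)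
    (mul_nonneg hk.le h1q) (by positivity) (by ring) heq z hz
end

section
/- Let S, E, I, A : ℝ → ℝ be differentiable functions with S(t) > 0 for all t, satisfying the first four SEIAR equations S' = μN − β_I S I − β_A S A − μS, E' = β_I S I + β_A S A − (k+μ)E, I' = k(1−q)E − (γ_I+μ)I, A' = kqE − (γ_A+μ)A. Define V₁(t) = (S − N − N ln(S/N)) + E + (Nβ_I/(γ_I+μ)) I + (Nβ_A/(γ_A+μ)) A. Then for all t, V₁'(t) = −μN(S/N + N/S − 2) + (k+μ)(R₀ − 1)E. In particular, if R₀ ≤ 1 and E(t) ≥ 0 for all t, then V₁'(t) ≤ 0 for all t. -/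
/-- The Lyapunov function `V₁` for the disease-free steady state of the SEIAR model has
derivative `V₁' = -μN(S/N + N/S - 2) + (k+μ)(R₀ - 1)E` along solutions; in particular,
if `R₀ ≤ 1` and `E ≥ 0`, then `V₁' ≤ 0`. -/
theorem seiar_lyapunov_dfe
    (N μ βI βA k γI γA q : ℝ)
    (hN : 0 < N) (hμ : 0 < μ) (hβI : 0 < βI) (hβA : 0 < βA)
    (hk : 0 < k) (hγI : 0 < γI) (hγA : 0 < γA)
    (hq0 : 0 ≤ q) (hq1 : q ≤ 1)
    (R₀ : ℝ)
    (hR₀ : R₀ = βI * N * k * (1 - q) / ((k + μ) * (γI + μ))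
              + βA * N * k * q / ((k + μ) * (γA + μ)))
    (S E I A : ℝ → ℝ)
    (hSpos : ∀ t : ℝ, 0 < S t)
    (hS : ∀ t : ℝ, HasDerivAt S (μ * N - βI * S t * I t - βA * S t * A t - μ * S t) t)
    (hE : ∀ t : ℝ, HasDerivAt E (βI * S t * I t + βA * S t * A t - (k + μ) * E t) t)
    (hI : ∀ t : ℝ, HasDerivAt I (k * (1 - q) * E t - (γI + μ) * I t) t)
    (hA : ∀ t : ℝ, HasDerivAt A (k * q * E t - (γA + μ) * A t) t)
    (V₁ : ℝ → ℝ)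
    (hV₁ : V₁ = fun t => (S t - N - N * Real.log (S t / N)) + E t
        + N * βI / (γI + μ) * I t + N * βA / (γA + μ) * A t) :
    (∀ t : ℝ, HasDerivAt V₁
      (-(μ * N) * (S t / N + N / S t - 2) + (k + μ) * (R₀ - 1) * E t) t) ∧
    (R₀ ≤ 1 → (∀ t : ℝ, 0 ≤ E t) → ∀ t : ℝ, deriv V₁ t ≤ 0) := by
  have hNne : N ≠ 0 := ne_of_gt hN
  have hγIne : γI + μ ≠ 0 := by positivity
  have hγAne : γA + μ ≠ 0 := by positivity
  have hkμ : (0:ℝ) < k + μ := by positivity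
  have hmain : ∀ t : ℝ, HasDerivAt V₁
      (-(μ * N) * (S t / N + N / S t - 2) + (k + μ) * (R₀ - 1) * E t) t := by
    intro t
    have hSne : S t ≠ 0 := ne_of_gt (hSpos t)
    set S' := μ * N - βI * S t * I t - βA * S t * A t - μ * S t with hS'
    have hlog : HasDerivAt (fun u => Real.log (S u / N)) (S' / N / (S t / N)) t := by
      have hdiv : HasDerivAt (fun u => S u / N) (S' / N) t := (hS t).div_const N
      exact hdiv.log (by positivity)
    have hD : HasDerivAt V₁
        (S' - N * (S' / N / (S t / N)) + (βI * S t * I t + βA * S t * A t - (k + μ) * E t)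
          + N * βI / (γI + μ) * (k * (1 - q) * E t - (γI + μ) * I t)
          + N * βA / (γA + μ) * (k * q * E t - (γA + μ) * A t)) t := by
      rw [hV₁]
      exact ((((hS t).sub_const N).sub (hlog.const_mul N)).add (hE t)).add
        ((hI t).const_mul (N * βI / (γI + μ))) |>.add ((hA t).const_mul (N * βA / (γA + μ)))
    convert hD using 1
    rw [hR₀]
    field_simp
    ring
  refine ⟨hmain, fun hR hEnn t => ?_⟩
  rw [(hmain t).deriv]
  have h1 : -(μ * N) * (S t / N + N / S t - 2) ≤ 0 := by
    have hSt := hSpos t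
    have hkey : S t / N + N / S t - 2 = (S t - N) ^ 2 / (N * S t) := by
      field_simp
      ring
    have hnn : (0:ℝ) ≤ S t / N + N / S t - 2 := by rw [hkey]; positivity
    nlinarith [mul_nonneg (mul_pos hμ hN).le hnn]
  have h2 : (k + μ) * (R₀ - 1) * E t ≤ 0 := by
    have : R₀ - 1 ≤ 0 := by linarith
    have := mul_nonpos_of_nonpos_of_nonneg (mul_nonpos_of_nonneg_of_nonpos (le_of_lt hkμ) this) (hEnn t)
    linarith [this]
  linarith
end

section
/- For all positive reals S, E, I, A, S*, E*, I*, A* satisfying the endemic steady state relations μN = β_I S*I* + β_A S*A* + μS*, β_I S*I* + β_A S*A* = (k+μ)E*, k(1−q)E* = (γ_I+μ)I*, and kqE* = (γ_A+μ)A*, if differentiable positive functions S, E, I, A satisfy the first four SEIAR equations, then the function V₂ = (S − S* − S* ln(S/S*)) + (E − E* − E* ln(E/E*)) + (β_I S*/(γ_I+μ))(I − I* − I* ln(I/I*)) + (β_A S*/(γ_A+μ))(A − A* − A* ln(A/A*)) satisfies V₂' = −μS*(S/S* + S*/S − 2) − β_I S*I*(S*/S + (S/S*)(I/I*)(E*/E)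 + (I*/I)(E/E*) − 3) − β_A S*A*(S*/S + (S/S*)(A/A*)(E*/E) + (A*/A)(E/E*) − 3), and in particular V₂' ≤ 0, with V₂' = 0 if and only if (S, E, I, A) = (S*, E*, I*, A*). -/
set_option maxHeartbeats 8000000
open Set

lemma expMul_hasDeriv (f f' : ℝ → ℝ) (c : ℝ) (hf : ∀ t, HasDerivAt f (f' t) t) (s : ℝ) :
    HasDerivAt (fun s => f s * Real.exp (c * s)) ((f' s + c * f s) * Real.exp (c * s)) s := by
  have he : HasDerivAt (fun s : ℝ => Real.exp (c * s)) (Real.exp (c * s) * c) s := by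
    simpa using ((hasDerivAt_id s).const_mul c).exp
  have := (hf s).mul he
  exact this.congr_deriv (by ring)

lemma expMul_monotoneOn (f f' : ℝ → ℝ) (c : ℝ)
    (hf : ∀ t, HasDerivAt f (f' t) t) (a b : ℝ)
    (hge : ∀ s ∈ Set.Icc a b, 0 ≤ f' s + c * f s) :
    MonotoneOn (fun s => f s * Real.exp (c * s)) (Set.Icc a b) := by
  apply monotoneOn_of_deriv_nonneg (convex_Icc a b)
  · exact (continuous_iff_continuousAt.2 fun t =>
      (expMul_hasDeriv f f' c hf t).continuousAt).continuousOn
  · exact fun x _ => (expMul_hasDeriv f f' c hf x).differentiableAt.differentiableWithinAt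
  · intro x hx
    rw [(expMul_hasDeriv f f' c hf x).deriv]
    exact mul_nonneg (hge x (interior_subset hx)) (Real.exp_pos _).le

lemma expMul_strictMonoOn (f f' : ℝ → ℝ) (c : ℝ)
    (hf : ∀ t, HasDerivAt f (f' t) t) (a b : ℝ)
    (hgt : ∀ s ∈ Set.Ioo a b, 0 < f' s + c * f s) :
    StrictMonoOn (fun s => f s * Real.exp (c * s)) (Set.Icc a b) := by
  apply strictMonoOn_of_deriv_pos (convex_Icc a b)
  · exact (continuous_iff_continuousAt.2 fun t =>
      (expMul_hasDeriv f f' c hf t).continuousAt).continuousOn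
  · intro x hx
    rw [interior_Icc] at hx
    rw [(expMul_hasDeriv f f' c hf x).deriv]
    exact mul_pos (hgt x hx) (Real.exp_pos _)

lemma amgm3' (u v : ℝ) (hu : 0 < u) (hv : 0 < v) : 3 ≤ u + v / u + 1 / v := by
  have h1 : 0 < u * v := mul_pos hu hv
  have h : 3 * (u * v) ≤ u * (u * v) + v * v + u := by
    nlinarith [sq_nonneg (u - v), sq_nonneg (v - 1), sq_nonneg (u - 1), sq_nonneg (u*v - v),
      sq_nonneg (u*v - u), sq_nonneg (u*v - 1), mul_pos hu hv, sq_nonneg (u + v - 2)]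
  have heq : u + v / u + 1 / v = (u * (u * v) + v * v + u) / (u * v) := by
    field_simp
  rw [heq, le_div_iff₀ h1]; linarith

lemma two_eq (x : ℝ) (hx : 0 < x) (h : x + 1 / x = 2) : x = 1 := by
  have : (x - 1) ^ 2 = 0 := by field_simp at h; nlinarith
  nlinarith [sq_nonneg (x-1)]

lemma two_ge (x : ℝ) (hx : 0 < x) : 2 ≤ x + 1 / x := by
  have h : 0 < x := hx
  rw [← sub_nonneg]
  have : x + 1/x - 2 = (x - 1)^2 / x := by field_simp; ring
  rw [this]; positivity

lemma blowdown (c B δ t1 : ℝ) (hc : 0 < c) (hB : 0 < B) (hδ : 0 < δ) :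
    ∃ t ≤ t1, B * Real.exp (c * t) < δ := by
  refine ⟨min t1 ((Real.log (δ / B) - 1) / c), min_le_left _ _, ?_⟩
  have h1 : c * min t1 ((Real.log (δ / B) - 1) / c) ≤ Real.log (δ / B) - 1 := by
    have := mul_le_mul_of_nonneg_left (min_le_right t1 ((Real.log (δ / B) - 1) / c)) hc.le
    rwa [mul_div_cancel₀ _ (ne_of_gt hc)] at this
  have h2 : Real.exp (c * min t1 ((Real.log (δ / B) - 1) / c)) < δ / B := by
    calc Real.exp _ ≤ Real.exp (Real.log (δ / B) - 1) := Real.exp_le_exp.2 h1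
    _ < Real.exp (Real.log (δ / B)) := Real.exp_lt_exp.2 (by linarith)
    _ = δ / B := Real.exp_log (by positivity)
  calc B * Real.exp _ < B * (δ / B) := by
        exact mul_lt_mul_of_pos_left h2 hB
  _ = δ := by field_simp


lemma my_deriv_comp (μ βI βA k γI γA N q : ℝ) (hμ : 0 < μ) (hβI : 0 < βI) (hβA : 0 < βA)
    (hk : 0 < k) (hγI : 0 < γI) (hγA : 0 < γA)
    (Sstar Estar Istar Astar : ℝ)
    (hSstarpos : 0 < Sstar) (hEstarpos : 0 < Estar)
    (hIstarpos : 0 < Istar) (hAstarpos : 0 < Astar)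
    (hrel1 : μ * N = βI * Sstar * Istar + βA * Sstar * Astar + μ * Sstar)
    (hrel2 : βI * Sstar * Istar + βA * Sstar * Astar = (k + μ) * Estar)
    (hrel3 : k * (1 - q) * Estar = (γI + μ) * Istar)
    (hrel4 : k * q * Estar = (γA + μ) * Astar)
    (S E I A : ℝ → ℝ)
    (hSpos : ∀ t : ℝ, 0 < S t) (hEpos : ∀ t : ℝ, 0 < E t)
    (hIpos : ∀ t : ℝ, 0 < I t) (hApos : ∀ t : ℝ, 0 < A t)
    (hS : ∀ t : ℝ, HasDerivAt S (μ * N - βI * S t * I t - βA * S t * A t - μ * S t) t)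
    (hE : ∀ t : ℝ, HasDerivAt E (βI * S t * I t + βA * S t * A t - (k + μ) * E t) t)
    (hI : ∀ t : ℝ, HasDerivAt I (k * (1 - q) * E t - (γI + μ) * I t) t)
    (hA : ∀ t : ℝ, HasDerivAt A (k * q * E t - (γA + μ) * A t) t)
    (t : ℝ) :
    HasDerivAt (fun t =>
      (S t - Sstar - Sstar * Real.log (S t / Sstar))
      + (E t - Estar - Estar * Real.log (E t / Estar))
      + βI * Sstar / (γI + μ) * (I t - Istar - Istar * Real.log (I t / Istar))
      + βA * Sstar / (γA + μ) * (A t - Astar - Astar * Real.log (A t / Astar)))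
      (-(μ * Sstar) * (S t / Sstar + Sstar / S t - 2)
       - βI * Sstar * Istar * (Sstar / S t
           + S t / Sstar * (I t / Istar) * (Estar / E t)
           + Istar / I t * (E t / Estar) - 3)
       - βA * Sstar * Astar * (Sstar / S t
           + S t / Sstar * (A t / Astar) * (Estar / E t)
           + Astar / A t * (E t / Estar) - 3)) t := by
  have hγIμ : (0:ℝ) < γI + μ := by linarith
  have hγAμ : (0:ℝ) < γA + μ := by linarith
  set S' := μ * N - βI * S t * I t - βA * S t * A t - μ * S t with hS'def
  set E' := βI * S t * I t + βA * S t * A t - (k + μ) * E t with hE'def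
  set I' := k * (1 - q) * E t - (γI + μ) * I t with hI'def
  set A' := k * q * E t - (γA + μ) * A t with hA'def
  have term : ∀ (f : ℝ → ℝ) (f' c : ℝ), HasDerivAt f f' t → 0 < c → (0 < f t) →
      HasDerivAt (fun t => f t - c - c * Real.log (f t / c)) (f' - c * (f' / f t)) t := by
    intro f f' c hf hc hft
    have hlog : HasDerivAt (fun t => Real.log (f t / c)) ((f' / c) / (f t / c)) t :=
      (hf.div_const c).log (by positivity)
    have := (hf.sub_const c).sub ((hlog.const_mul c))
    refine this.congr_deriv ?_
    have hc' : c ≠ 0 := ne_of_gt hc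
    have hf' : f t ≠ 0 := ne_of_gt hft
    field_simp
  have h1 := term S S' Sstar (hS t) hSstarpos (hSpos t)
  have h2 := term E E' Estar (hE t) hEstarpos (hEpos t)
  have h3 := term I I' Istar (hI t) hIstarpos (hIpos t)
  have h4 := term A A' Astar (hA t) hAstarpos (hApos t)
  have hall := ((h1.add h2).add (h3.const_mul (βI * Sstar / (γI + μ)))).add
      (h4.const_mul (βA * Sstar / (γA + μ)))
  refine hall.congr_deriv ?_
  have hγIv : γI + μ = k * (1 - q) * Estar / Istar := by
    field_simp; linarith [hrel3]
  have hγAv : γA + μ = k * q * Estar / Astar := by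
    field_simp; linarith [hrel4]
  have hkμ : k + μ = (βI * Sstar * Istar + βA * Sstar * Astar) / Estar := by
    field_simp; linarith [hrel2]
  rw [hS'def, hE'def, hI'def, hA'def, hrel1, hγIv, hγAv, hkμ]
  have h1 : S t ≠ 0 := ne_of_gt (hSpos t)
  have h2 : E t ≠ 0 := ne_of_gt (hEpos t)
  have h3 : I t ≠ 0 := ne_of_gt (hIpos t)
  have h4 : A t ≠ 0 := ne_of_gt (hApos t)
  have h5 : Sstar ≠ 0 := ne_of_gt hSstarpos
  have h6 : Estar ≠ 0 := ne_of_gt hEstarpos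
  have h7 : Istar ≠ 0 := ne_of_gt hIstarpos
  have h8 : Astar ≠ 0 := ne_of_gt hAstarpos
  have h9 : k * (1-q) * Estar ≠ 0 := by rw [hrel3]; positivity
  have h10 : k * q * Estar ≠ 0 := by rw [hrel4]; positivity
  have h11 : q ≠ 0 := by rintro rfl; simp at h10
  have h12 : 1 - q ≠ 0 := by intro h; rw [h] at h9; simp at h9
  field_simp
  ring

lemma seiarAux_contra (N μ βI βA k γI γA q : ℝ)
    (hμ : 0 < μ) (hβI : 0 < βI) (hβA : 0 < βA)
    (hk : 0 < k) (hγI : 0 < γI) (hγA : 0 < γA)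
    (hq0 : 0 < q) (hq1 : q < 1)
    (Sstar Estar Istar Astar : ℝ)
    (hSstarpos : 0 < Sstar) (hEstarpos : 0 < Estar)
    (hIstarpos : 0 < Istar) (hAstarpos : 0 < Astar)
    (hrel1 : μ * N = βI * Sstar * Istar + βA * Sstar * Astar + μ * Sstar)
    (hrel2 : βI * Sstar * Istar + βA * Sstar * Astar = (k + μ) * Estar)
    (hrel3 : k * (1 - q) * Estar = (γI + μ) * Istar)
    (hrel4 : k * q * Estar = (γA + μ) * Astar)
    (S E I A : ℝ → ℝ)
    (hSpos : ∀ t : ℝ, 0 < S t) (hEpos : ∀ t : ℝ, 0 < E t)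
    (hIpos : ∀ t : ℝ, 0 < I t) (hApos : ∀ t : ℝ, 0 < A t)
    (hS : ∀ t : ℝ, HasDerivAt S (μ * N - βI * S t * I t - βA * S t * A t - μ * S t) t)
    (hE : ∀ t : ℝ, HasDerivAt E (βI * S t * I t + βA * S t * A t - (k + μ) * E t) t)
    (hI : ∀ t : ℝ, HasDerivAt I (k * (1 - q) * E t - (γI + μ) * I t) t)
    (hA : ∀ t : ℝ, HasDerivAt A (k * q * E t - (γA + μ) * A t) t)
    (t0 lam : ℝ) (hlam0 : 0 < lam) (hlamne : lam ≠ 1)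
    (h0S : S t0 = Sstar) (h0E : E t0 = lam * Estar)
    (h0I : I t0 = lam * Istar) (h0A : A t0 = lam * Astar) : False := by
  -- the second derivative of E at t0
  have hfE' : HasDerivAt (fun t => βI * S t * I t + βA * S t * A t - (k + μ) * E t)
      (((βI * (μ * N - βI * S t0 * I t0 - βA * S t0 * A t0 - μ * S t0)) * I t0
         + (βI * S t0) * (k * (1 - q) * E t0 - (γI + μ) * I t0))
       + ((βA * (μ * N - βI * S t0 * I t0 - βA * S t0 * A t0 - μ * S t0)) * A t0
         + (βA * S t0) * (k * q * E t0 - (γA + μ) * A t0))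
       - (k + μ) * (βI * S t0 * I t0 + βA * S t0 * A t0 - (k + μ) * E t0)) t0 := by
    exact ((((hS t0).const_mul βI).mul (hI t0)).add
      (((hS t0).const_mul βA).mul (hA t0))).sub ((hE t0).const_mul (k + μ))
  have hVval : (((βI * (μ * N - βI * S t0 * I t0 - βA * S t0 * A t0 - μ * S t0)) * I t0
         + (βI * S t0) * (k * (1 - q) * E t0 - (γI + μ) * I t0))
       + ((βA * (μ * N - βI * S t0 * I t0 - βA * S t0 * A t0 - μ * S t0)) * A t0
         + (βA * S t0) * (k * q * E t0 - (γA + μ) * A t0))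
       - (k + μ) * (βI * S t0 * I t0 + βA * S t0 * A t0 - (k + μ) * E t0))
      = lam * (1 - lam) * ((k + μ) * Estar) * (βI * Istar + βA * Astar) := by
    rw [h0S, h0E, h0I, h0A]
    linear_combination (lam * βI * Istar + lam * βA * Astar) * hrel1
      + (lam - lam * lam) * (βI * Istar + βA * Astar) * hrel2
      + (lam * βI * Sstar) * hrel3 + (lam * βA * Sstar) * hrel4
      - (lam * (k + μ)) * hrel2
  -- basic positivity
  have hkμ : (0:ℝ) < k + μ := by linarith
  have hγIμ : (0:ℝ) < γI + μ := by linarith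
  have hγAμ : (0:ℝ) < γA + μ := by linarith
  have hq' : (0:ℝ) < 1 - q := by linarith
  have contE : Continuous E := continuous_iff_continuousAt.2 fun t => (hE t).continuousAt
  have hfE0 : βI * S t0 * I t0 + βA * S t0 * A t0 - (k + μ) * E t0 = 0 := by
    rw [h0S, h0E, h0I, h0A]; linear_combination lam * hrel2
  set R : ℝ := μ + lam * ((k + μ) * Estar) / Sstar with hRdef
  have hRpos : 0 < R := by positivity
  rw [hVval] at hfE'
  rcases lt_or_gt_of_ne hlamne with hlt | hgt
  · -- case lam < 1
    have hVpos : 0 < lam * (1 - lam) * ((k + μ) * Estar) * (βI * Istar + βA * Astar) := by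
      have h1 : 0 < βI * Istar + βA * Astar := by positivity
      have h2 : 0 < (k + μ) * Estar := by positivity
      have h3 := mul_pos (mul_pos (mul_pos hlam0 (by linarith : (0:ℝ) < 1 - lam)) h2) h1
      nlinarith [h3]
    have hts := hasDerivAt_iff_tendsto_slope.mp hfE'
    have hev : ∀ᶠ x in nhdsWithin t0 {t0}ᶜ,
        0 < slope (fun t => βI * S t * I t + βA * S t * A t - (k + μ) * E t) t0 x :=
      hts.eventually_const_lt hVpos
    have hev2 : ∀ᶠ x in nhdsWithin t0 (Iio t0),
        0 < slope (fun t => βI * S t * I t + βA * S t * A t - (k + μ) * E t) t0 x :=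
      hev.filter_mono (nhdsWithin_mono t0 fun x hx => ne_of_lt hx)
    obtain ⟨u, hu, husub⟩ := mem_nhdsLT_iff_exists_Ioo_subset.mp hev2
    rw [mem_Iio] at hu
    have hfEneg : ∀ x ∈ Ioo u t0, βI * S x * I x + βA * S x * A x - (k + μ) * E x < 0 := by
      intro x hx
      have h := husub hx
      simp only [mem_setOf_eq, slope_def_field] at h
      rw [hfE0] at h
      by_contra hc
      push_neg at hc
      have h2 : (βI * S x * I x + βA * S x * A x - (k + μ) * E x - 0) / (x - t0) ≤ 0 :=
        div_nonpos_iff.2 (Or.inl ⟨by linarith, by linarith [hx.2]⟩)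
      linarith
    set t1 : ℝ := (u + t0) / 2 with ht1def
    have hut1 : u < t1 := by rw [ht1def]; linarith
    have ht1t0 : t1 < t0 := by rw [ht1def]; linarith
    have hEstrict : StrictAntiOn E (Icc t1 t0) := by
      apply strictAntiOn_of_deriv_neg (convex_Icc _ _) contE.continuousOn
      intro x hx
      rw [interior_Icc] at hx
      rw [(hE x).deriv]
      exact hfEneg x ⟨by linarith [hx.1], hx.2⟩
    have hE_gt : ∀ s ∈ Ico t1 t0, lam * Estar < E s := by
      intro s hs
      have := hEstrict ⟨hs.1, hs.2.le⟩ ⟨ht1t0.le, le_refl t0⟩ hs.2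
      rwa [h0E] at this
    -- transport lemmas
    have chainI : ∀ a, a ≤ t0 → (∀ s ∈ Icc a t0, lam * Estar ≤ E s) →
        ∀ s ∈ Icc a t0, I s ≤ lam * Istar := by
      intro a ha hreg s hs
      have hmono := expMul_monotoneOn (fun s => I s - lam * Istar)
          (fun s => k * (1 - q) * E s - (γI + μ) * I s) (γI + μ)
          (fun t => (hI t).sub_const _) a t0 (by
            intro s hs2
            have h := hreg s hs2
            have heq : k * (1 - q) * E s - (γI + μ) * I s + (γI + μ) * (I s - lam * Istar)
                = k * (1 - q) * (E s - lam * Estar) := by linear_combination lam * hrel3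
            rw [heq]
            have : (0:ℝ) ≤ k * (1 - q) := by positivity
            nlinarith)
      have := hmono hs ⟨ha, le_refl t0⟩ hs.2
      simp only [h0I] at this
      have hexp := Real.exp_pos ((γI + μ) * s)
      nlinarith [this]
    have chainA : ∀ a, a ≤ t0 → (∀ s ∈ Icc a t0, lam * Estar ≤ E s) →
        ∀ s ∈ Icc a t0, A s ≤ lam * Astar := by
      intro a ha hreg s hs
      have hmono := expMul_monotoneOn (fun s => A s - lam * Astar)
          (fun s => k * q * E s - (γA + μ) * A s) (γA + μ)
          (fun t => (hA t).sub_const _) a t0 (by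
            intro s hs2
            have h := hreg s hs2
            have heq : k * q * E s - (γA + μ) * A s + (γA + μ) * (A s - lam * Astar)
                = k * q * (E s - lam * Estar) := by linear_combination lam * hrel4
            rw [heq]
            have : (0:ℝ) ≤ k * q := by positivity
            nlinarith)
      have := hmono hs ⟨ha, le_refl t0⟩ hs.2
      simp only [h0A] at this
      have hexp := Real.exp_pos ((γA + μ) * s)
      nlinarith [this]
    have chainS : ∀ a, a ≤ t0 → (∀ s ∈ Icc a t0, lam * Estar ≤ E s) →
        ∀ s ∈ Icc a t0, S s ≤ Sstar := by
      intro a ha hreg s hs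
      have hIb := chainI a ha hreg
      have hAb := chainA a ha hreg
      have hmono := expMul_monotoneOn (fun s => S s - Sstar)
          (fun s => μ * N - βI * S s * I s - βA * S s * A s - μ * S s) R
          (fun t => (hS t).sub_const _) a t0 (by
            intro s hs2
            have h1 := hIb s hs2
            have h2 := hAb s hs2
            have key : μ * N - βI * S s * I s - βA * S s * A s - μ * S s + R * (S s - Sstar)
                = βI * S s * (lam * Istar - I s) + βA * S s * (lam * Astar - A s)
                  + (1 - lam) * ((k + μ) * Estar)
                  + (lam * ((k + μ) * Estar) / Sstar) * (S s - Sstar)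
                  - (lam * (βI * Istar + βA * Astar)) * (S s - Sstar) := by
              rw [hRdef]
              field_simp
              linear_combination Sstar * hrel1 + Sstar * hrel2 - lam * Sstar * hrel2
            have hz : lam * ((k + μ) * Estar) / Sstar = lam * (βI * Istar + βA * Astar) := by
              field_simp
              linear_combination (-1) * hrel2
            rw [key, hz]
            have e1 : 0 ≤ βI * S s * (lam * Istar - I s) :=
              mul_nonneg (mul_pos hβI (hSpos s)).le (by linarith)
            have e2 : 0 ≤ βA * S s * (lam * Astar - A s) :=
              mul_nonneg (mul_pos hβA (hSpos s)).le (by linarith)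
            have e3 : 0 ≤ (1 - lam) * ((k + μ) * Estar) :=
              mul_nonneg (by linarith) (by positivity)
            linarith)
      have := hmono hs ⟨ha, le_refl t0⟩ hs.2
      simp only [h0S] at this
      have hexp := Real.exp_pos (R * s)
      nlinarith [this]
    have chainEmono : ∀ a, a ≤ t0 → (∀ s ∈ Icc a t0, lam * Estar ≤ E s) →
        MonotoneOn (fun s => (lam * Estar - E s) * Real.exp ((k + μ) * s)) (Icc a t0) := by
      intro a ha hreg
      have hSb := chainS a ha hreg
      have hIb := chainI a ha hreg
      have hAb := chainA a ha hreg
      refine expMul_monotoneOn (fun s => lam * Estar - E s)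
          (fun s => -(βI * S s * I s + βA * S s * A s - (k + μ) * E s)) (k + μ)
          (fun t => (hE t).const_sub _) a t0 ?_
      intro s hs
      show 0 ≤ -(βI * S s * I s + βA * S s * A s - (k + μ) * E s)
          + (k + μ) * (lam * Estar - E s)
      have h1 := hSb s hs
      have h2 := hIb s hs
      have h3 := hAb s hs
      have hb1 : S s * I s ≤ Sstar * (lam * Istar) :=
        mul_le_mul h1 h2 (hIpos s).le hSstarpos.le
      have hb2 : S s * A s ≤ Sstar * (lam * Astar) :=
        mul_le_mul h1 h3 (hApos s).le hSstarpos.le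
      have hb1' := mul_le_mul_of_nonneg_left hb1 hβI.le
      have hb2' := mul_le_mul_of_nonneg_left hb2 hβA.le
      have hE2 : βI * (Sstar * (lam * Istar)) + βA * (Sstar * (lam * Astar))
          = lam * ((k + μ) * Estar) := by linear_combination lam * hrel2
      linarith [hb1', hb2', hE2]
    -- continuous induction: E stays ≥ lam * Estar for all t ≤ t1
    have hregt1 : ∀ s, t1 ≤ s → s ≤ t0 → lam * Estar ≤ E s := by
      intro s h1 h2
      rcases eq_or_lt_of_le h2 with h | h
      · rw [h, h0E]
      · exact (hE_gt s ⟨h1, h⟩).le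
    have hFt1neg : (lam * Estar - E t1) * Real.exp ((k + μ) * t1) < 0 :=
      mul_neg_of_neg_of_pos (by linarith [hE_gt t1 ⟨le_refl t1, ht1t0⟩]) (Real.exp_pos _)
    have C1 : ∀ t ≤ t1, lam * Estar ≤ E t := by
      by_contra hc
      push_neg at hc
      obtain ⟨t2, ht2, hltE⟩ := hc
      have ht2lt : t2 < t1 := by
        rcases eq_or_lt_of_le ht2 with h | h
        · exfalso; rw [h] at hltE; linarith [hE_gt t1 ⟨le_refl t1, ht1t0⟩]
        · exact h
      set Z := Icc t2 t1 ∩ E ⁻¹' (Iic (lam * Estar)) with hZdef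
      have hZne : t2 ∈ Z := ⟨⟨le_refl t2, ht2lt.le⟩, le_of_lt hltE⟩
      have hZclosed : IsClosed Z := isClosed_Icc.inter (isClosed_Iic.preimage contE)
      have hZbdd : BddAbove Z := bddAbove_Icc.mono inter_subset_left
      set u' := sSup Z with hu'def
      have hu'mem := hZclosed.csSup_mem ⟨t2, hZne⟩ hZbdd
      obtain ⟨⟨hu't2, hu't1⟩, hEu'⟩ := hu'mem
      rw [mem_preimage, mem_Iic] at hEu'
      have hu'lt : u' < t1 := by
        rcases eq_or_lt_of_le hu't1 with h | h
        · exfalso; rw [h] at hEu'; linarith [hE_gt t1 ⟨le_refl t1, ht1t0⟩]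
        · exact h
      have hbet : ∀ s, u' < s → s ≤ t1 → lam * Estar < E s := by
        intro s h1 h2
        by_contra hcc
        push_neg at hcc
        have hsZ : s ∈ Z := ⟨⟨le_trans hu't2 h1.le, h2⟩, hcc⟩
        have := le_csSup hZbdd hsZ
        linarith
      have hregw : ∀ w, u' < w → w ≤ t1 → ∀ s ∈ Icc w t0, lam * Estar ≤ E s := by
        intro w hw1 hw2 s hs
        rcases le_or_gt s t1 with h | h
        · exact (hbet s (lt_of_lt_of_le hw1 hs.1) h).le
        · exact hregt1 s h.le hs.2
      have hFle : ∀ w ∈ Ioc u' t1,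
          (lam * Estar - E w) * Real.exp ((k + μ) * w)
            ≤ (lam * Estar - E t1) * Real.exp ((k + μ) * t1) := by
        intro w hw
        have hm := chainEmono w (le_trans hw.2 ht1t0.le) (hregw w hw.1 hw.2)
        exact hm ⟨le_refl w, le_trans hw.2 ht1t0.le⟩ ⟨hw.2, ht1t0.le⟩ hw.2
      have hclosset : IsClosed {x : ℝ | (lam * Estar - E x) * Real.exp ((k + μ) * x)
          ≤ (lam * Estar - E t1) * Real.exp ((k + μ) * t1)} := by
        apply isClosed_le _ continuous_const
        exact (continuous_const.sub contE).mul
          (Real.continuous_exp.comp (continuous_const.mul continuous_id))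
      have hsub2 : Icc u' t1 ⊆ {x : ℝ | (lam * Estar - E x) * Real.exp ((k + μ) * x)
          ≤ (lam * Estar - E t1) * Real.exp ((k + μ) * t1)} := by
        rw [← closure_Ioc (ne_of_lt hu'lt)]
        exact closure_minimal hFle hclosset
      have hu'val := hsub2 ⟨le_refl u', hu'lt.le⟩
      rw [mem_setOf_eq] at hu'val
      have hexp := Real.exp_pos ((k + μ) * u')
      nlinarith [hu'val, hFt1neg]
    have hregAll : ∀ s, s ≤ t0 → lam * Estar ≤ E s := by
      intro s hs
      rcases le_or_gt s t1 with h | h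
      · exact C1 s h
      · exact hregt1 s h.le hs
    -- I decays to negative values backward in time
    have hIstrict : StrictMonoOn
        (fun s => (I s - lam * Istar) * Real.exp ((γI + μ) * s)) (Icc t1 t0) := by
      refine expMul_strictMonoOn (fun s => I s - lam * Istar)
          (fun s => k * (1 - q) * E s - (γI + μ) * I s) (γI + μ)
          (fun t => (hI t).sub_const _) t1 t0 ?_
      intro s hs
      have h := hE_gt s ⟨hs.1.le, hs.2⟩
      have heq : k * (1 - q) * E s - (γI + μ) * I s + (γI + μ) * (I s - lam * Istar)
          = k * (1 - q) * (E s - lam * Estar) := by linear_combination lam * hrel3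
      rw [heq]
      have hkq : (0:ℝ) < k * (1 - q) := by positivity
      nlinarith
    have hFIt1 : (I t1 - lam * Istar) * Real.exp ((γI + μ) * t1) < 0 := by
      have := hIstrict ⟨le_refl t1, ht1t0.le⟩ ⟨ht1t0.le, le_refl t0⟩ ht1t0
      simp only [h0I] at this
      simpa using this
    have chainImono : ∀ a, a ≤ t0 →
        MonotoneOn (fun s => (I s - lam * Istar) * Real.exp ((γI + μ) * s)) (Icc a t0) := by
      intro a ha
      refine expMul_monotoneOn (fun s => I s - lam * Istar)
          (fun s => k * (1 - q) * E s - (γI + μ) * I s) (γI + μ)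
          (fun t => (hI t).sub_const _) a t0 ?_
      intro s hs
      have h := hregAll s hs.2
      have heq : k * (1 - q) * E s - (γI + μ) * I s + (γI + μ) * (I s - lam * Istar)
          = k * (1 - q) * (E s - lam * Estar) := by linear_combination lam * hrel3
      rw [heq]
      have : (0:ℝ) ≤ k * (1 - q) := by positivity
      nlinarith
    obtain ⟨t, htle, hbd⟩ := blowdown (γI + μ) (lam * Istar)
        (-((I t1 - lam * Istar) * Real.exp ((γI + μ) * t1))) t1 hγIμ (by positivity)
        (by linarith)
    have hm := chainImono t (by linarith [ht1t0])
    have h1 : (I t - lam * Istar) * Real.exp ((γI + μ) * t)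
        ≤ (I t1 - lam * Istar) * Real.exp ((γI + μ) * t1) :=
      hm ⟨le_refl t, by linarith⟩ ⟨htle, ht1t0.le⟩ htle
    have hexp := Real.exp_pos ((γI + μ) * t)
    nlinarith [hIpos t, h1, hbd]
  · -- case 1 < lam
    have hVneg : lam * (1 - lam) * ((k + μ) * Estar) * (βI * Istar + βA * Astar) < 0 := by
      have h1 : 0 < βI * Istar + βA * Astar := by positivity
      have h2 : 0 < (k + μ) * Estar := by positivity
      have h3 := mul_pos (mul_pos (mul_pos hlam0 (by linarith : (0:ℝ) < lam - 1)) h2) h1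
      nlinarith [h3]
    have hts := hasDerivAt_iff_tendsto_slope.mp hfE'
    have hev : ∀ᶠ x in nhdsWithin t0 {t0}ᶜ,
        slope (fun t => βI * S t * I t + βA * S t * A t - (k + μ) * E t) t0 x < 0 :=
      hts.eventually_lt_const hVneg
    have hev2 : ∀ᶠ x in nhdsWithin t0 (Iio t0),
        slope (fun t => βI * S t * I t + βA * S t * A t - (k + μ) * E t) t0 x < 0 :=
      hev.filter_mono (nhdsWithin_mono t0 fun x hx => ne_of_lt hx)
    obtain ⟨u, hu, husub⟩ := mem_nhdsLT_iff_exists_Ioo_subset.mp hev2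
    rw [mem_Iio] at hu
    have hfEpos : ∀ x ∈ Ioo u t0, 0 < βI * S x * I x + βA * S x * A x - (k + μ) * E x := by
      intro x hx
      have h := husub hx
      simp only [mem_setOf_eq, slope_def_field] at h
      rw [hfE0] at h
      by_contra hc
      push_neg at hc
      have h2 : (0:ℝ) ≤ (βI * S x * I x + βA * S x * A x - (k + μ) * E x - 0) / (x - t0) :=
        div_nonneg_iff.2 (Or.inr ⟨by linarith, by linarith [hx.2]⟩)
      linarith
    set t1 : ℝ := (u + t0) / 2 with ht1def
    have hut1 : u < t1 := by rw [ht1def]; linarith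
    have ht1t0 : t1 < t0 := by rw [ht1def]; linarith
    have hEstrict : StrictMonoOn E (Icc t1 t0) := by
      apply strictMonoOn_of_deriv_pos (convex_Icc _ _) contE.continuousOn
      intro x hx
      rw [interior_Icc] at hx
      rw [(hE x).deriv]
      exact hfEpos x ⟨by linarith [hx.1], hx.2⟩
    have hE_lt : ∀ s ∈ Ico t1 t0, E s < lam * Estar := by
      intro s hs
      have := hEstrict ⟨hs.1, hs.2.le⟩ ⟨ht1t0.le, le_refl t0⟩ hs.2
      rwa [h0E] at this
    -- transport lemmas
    have chainI : ∀ a, a ≤ t0 → (∀ s ∈ Icc a t0, E s ≤ lam * Estar) →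
        ∀ s ∈ Icc a t0, lam * Istar ≤ I s := by
      intro a ha hreg s hs
      have hmono := expMul_monotoneOn (fun s => lam * Istar - I s)
          (fun s => -(k * (1 - q) * E s - (γI + μ) * I s)) (γI + μ)
          (fun t => (hI t).const_sub _) a t0 (by
            intro s hs2
            have h := hreg s hs2
            have heq : -(k * (1 - q) * E s - (γI + μ) * I s) + (γI + μ) * (lam * Istar - I s)
                = k * (1 - q) * (lam * Estar - E s) := by linear_combination (-lam) * hrel3
            rw [heq]
            have : (0:ℝ) ≤ k * (1 - q) := by positivity
            nlinarith)
      have := hmono hs ⟨ha, le_refl t0⟩ hs.2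
      simp only [h0I] at this
      have hexp := Real.exp_pos ((γI + μ) * s)
      nlinarith [this]
    have chainA : ∀ a, a ≤ t0 → (∀ s ∈ Icc a t0, E s ≤ lam * Estar) →
        ∀ s ∈ Icc a t0, lam * Astar ≤ A s := by
      intro a ha hreg s hs
      have hmono := expMul_monotoneOn (fun s => lam * Astar - A s)
          (fun s => -(k * q * E s - (γA + μ) * A s)) (γA + μ)
          (fun t => (hA t).const_sub _) a t0 (by
            intro s hs2
            have h := hreg s hs2
            have heq : -(k * q * E s - (γA + μ) * A s) + (γA + μ) * (lam * Astar - A s)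
                = k * q * (lam * Estar - E s) := by linear_combination (-lam) * hrel4
            rw [heq]
            have : (0:ℝ) ≤ k * q := by positivity
            nlinarith)
      have := hmono hs ⟨ha, le_refl t0⟩ hs.2
      simp only [h0A] at this
      have hexp := Real.exp_pos ((γA + μ) * s)
      nlinarith [this]
    have chainS : ∀ a, a ≤ t0 → (∀ s ∈ Icc a t0, E s ≤ lam * Estar) →
        ∀ s ∈ Icc a t0, Sstar ≤ S s := by
      intro a ha hreg s hs
      have hIb := chainI a ha hreg
      have hAb := chainA a ha hreg
      have hmono := expMul_monotoneOn (fun s => Sstar - S s)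
          (fun s => -(μ * N - βI * S s * I s - βA * S s * A s - μ * S s)) R
          (fun t => (hS t).const_sub _) a t0 (by
            intro s hs2
            have h1 := hIb s hs2
            have h2 := hAb s hs2
            have key : -(μ * N - βI * S s * I s - βA * S s * A s - μ * S s) + R * (Sstar - S s)
                = βI * S s * (I s - lam * Istar) + βA * S s * (A s - lam * Astar)
                  + (lam - 1) * ((k + μ) * Estar)
                  + (lam * ((k + μ) * Estar) / Sstar) * (Sstar - S s)
                  - (lam * (βI * Istar + βA * Astar)) * (Sstar - S s) := by
              rw [hRdef]
              field_simp
              linear_combination (Sstar - S s) * lam * hrel2 + Sstar * hrel1 - Sstar * hrel2 + (S s * lam) * hrel2 - 2 * Sstar * hrel1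
            have hz : lam * ((k + μ) * Estar) / Sstar = lam * (βI * Istar + βA * Astar) := by
              field_simp
              linear_combination (-1) * hrel2
            rw [key, hz]
            have e1 : 0 ≤ βI * S s * (I s - lam * Istar) :=
              mul_nonneg (mul_pos hβI (hSpos s)).le (by linarith)
            have e2 : 0 ≤ βA * S s * (A s - lam * Astar) :=
              mul_nonneg (mul_pos hβA (hSpos s)).le (by linarith)
            have e3 : 0 ≤ (lam - 1) * ((k + μ) * Estar) :=
              mul_nonneg (by linarith) (by positivity)
            linarith)
      have := hmono hs ⟨ha, le_refl t0⟩ hs.2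
      simp only [h0S] at this
      have hexp := Real.exp_pos (R * s)
      nlinarith [this]
    have chainEmono : ∀ a, a ≤ t0 → (∀ s ∈ Icc a t0, E s ≤ lam * Estar) →
        MonotoneOn (fun s => (E s - lam * Estar) * Real.exp ((k + μ) * s)) (Icc a t0) := by
      intro a ha hreg
      have hSb := chainS a ha hreg
      have hIb := chainI a ha hreg
      have hAb := chainA a ha hreg
      refine expMul_monotoneOn (fun s => E s - lam * Estar)
          (fun s => βI * S s * I s + βA * S s * A s - (k + μ) * E s) (k + μ)
          (fun t => (hE t).sub_const _) a t0 ?_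
      intro s hs
      show 0 ≤ βI * S s * I s + βA * S s * A s - (k + μ) * E s + (k + μ) * (E s - lam * Estar)
      have h1 := hSb s hs
      have h2 := hIb s hs
      have h3 := hAb s hs
      have hb1 : Sstar * (lam * Istar) ≤ S s * I s :=
        mul_le_mul h1 h2 (by positivity) (hSpos s).le
      have hb2 : Sstar * (lam * Astar) ≤ S s * A s :=
        mul_le_mul h1 h3 (by positivity) (hSpos s).le
      have hb1' := mul_le_mul_of_nonneg_left hb1 hβI.le
      have hb2' := mul_le_mul_of_nonneg_left hb2 hβA.le
      have hE2 : βI * (Sstar * (lam * Istar)) + βA * (Sstar * (lam * Astar))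
          = lam * ((k + μ) * Estar) := by linear_combination lam * hrel2
      linarith [hb1', hb2', hE2]
    -- continuous induction: E stays ≤ lam * Estar for all t ≤ t1
    have hregt1 : ∀ s, t1 ≤ s → s ≤ t0 → E s ≤ lam * Estar := by
      intro s h1 h2
      rcases eq_or_lt_of_le h2 with h | h
      · rw [h, h0E]
      · exact (hE_lt s ⟨h1, h⟩).le
    have hFt1neg : (E t1 - lam * Estar) * Real.exp ((k + μ) * t1) < 0 :=
      mul_neg_of_neg_of_pos (by linarith [hE_lt t1 ⟨le_refl t1, ht1t0⟩]) (Real.exp_pos _)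
    have C1 : ∀ t ≤ t1, E t ≤ lam * Estar := by
      by_contra hc
      push_neg at hc
      obtain ⟨t2, ht2, hgtE⟩ := hc
      have ht2lt : t2 < t1 := by
        rcases eq_or_lt_of_le ht2 with h | h
        · exfalso; rw [h] at hgtE; linarith [hE_lt t1 ⟨le_refl t1, ht1t0⟩]
        · exact h
      set Z := Icc t2 t1 ∩ E ⁻¹' (Ici (lam * Estar)) with hZdef
      have hZne : t2 ∈ Z := ⟨⟨le_refl t2, ht2lt.le⟩, le_of_lt hgtE⟩
      have hZclosed : IsClosed Z := isClosed_Icc.inter (isClosed_Ici.preimage contE)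
      have hZbdd : BddAbove Z := bddAbove_Icc.mono inter_subset_left
      set u' := sSup Z with hu'def
      have hu'mem := hZclosed.csSup_mem ⟨t2, hZne⟩ hZbdd
      obtain ⟨⟨hu't2, hu't1⟩, hEu'⟩ := hu'mem
      rw [mem_preimage, mem_Ici] at hEu'
      have hu'lt : u' < t1 := by
        rcases eq_or_lt_of_le hu't1 with h | h
        · exfalso; rw [h] at hEu'; linarith [hE_lt t1 ⟨le_refl t1, ht1t0⟩]
        · exact h
      have hbet : ∀ s, u' < s → s ≤ t1 → E s < lam * Estar := by
        intro s h1 h2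
        by_contra hcc
        push_neg at hcc
        have hsZ : s ∈ Z := ⟨⟨le_trans hu't2 h1.le, h2⟩, hcc⟩
        have := le_csSup hZbdd hsZ
        linarith
      have hregw : ∀ w, u' < w → w ≤ t1 → ∀ s ∈ Icc w t0, E s ≤ lam * Estar := by
        intro w hw1 hw2 s hs
        rcases le_or_gt s t1 with h | h
        · exact (hbet s (lt_of_lt_of_le hw1 hs.1) h).le
        · exact hregt1 s h.le hs.2
      have hFle : ∀ w ∈ Ioc u' t1,
          (E w - lam * Estar) * Real.exp ((k + μ) * w)
            ≤ (E t1 - lam * Estar) * Real.exp ((k + μ) * t1) := by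
        intro w hw
        have hm := chainEmono w (le_trans hw.2 ht1t0.le) (hregw w hw.1 hw.2)
        exact hm ⟨le_refl w, le_trans hw.2 ht1t0.le⟩ ⟨hw.2, ht1t0.le⟩ hw.2
      have hclosset : IsClosed {x : ℝ | (E x - lam * Estar) * Real.exp ((k + μ) * x)
          ≤ (E t1 - lam * Estar) * Real.exp ((k + μ) * t1)} := by
        apply isClosed_le _ continuous_const
        exact (contE.sub continuous_const).mul
          (Real.continuous_exp.comp (continuous_const.mul continuous_id))
      have hsub2 : Icc u' t1 ⊆ {x : ℝ | (E x - lam * Estar) * Real.exp ((k + μ) * x)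
          ≤ (E t1 - lam * Estar) * Real.exp ((k + μ) * t1)} := by
        rw [← closure_Ioc (ne_of_lt hu'lt)]
        exact closure_minimal hFle hclosset
      have hu'val := hsub2 ⟨le_refl u', hu'lt.le⟩
      rw [mem_setOf_eq] at hu'val
      have hexp := Real.exp_pos ((k + μ) * u')
      nlinarith [hu'val, hFt1neg]
    -- final blow-down
    have hregAll : ∀ s, s ≤ t0 → E s ≤ lam * Estar := by
      intro s hs
      rcases le_or_gt s t1 with h | h
      · exact C1 s h
      · exact hregt1 s h.le hs
    obtain ⟨t, htle, hbd⟩ := blowdown (k + μ) (lam * Estar)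
        (-((E t1 - lam * Estar) * Real.exp ((k + μ) * t1))) t1 hkμ (by positivity)
        (by linarith)
    have hm := chainEmono t (by linarith [ht1t0]) (fun s hs => hregAll s hs.2)
    have h1 : (E t - lam * Estar) * Real.exp ((k + μ) * t)
        ≤ (E t1 - lam * Estar) * Real.exp ((k + μ) * t1) :=
      hm ⟨le_refl t, by linarith⟩ ⟨htle, ht1t0.le⟩ htle
    have hexp := Real.exp_pos ((k + μ) * t)
    nlinarith [hEpos t, h1, hbd]



lemma seiarAux_b1 (a b : ℝ) (ha : 0 < a) (hb : 0 < b) : 0 ≤ a / b + b / a - 2 := by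
  have h := two_ge (a / b) (by positivity)
  have h2 : b / a = 1 / (a / b) := by
    rw [one_div_div]
  rw [h2]
  linarith

lemma seiarAux_b1eq (a b : ℝ) (ha : 0 < a) (hb : 0 < b)
    (h : a / b + b / a - 2 = 0) : a = b := by
  have h2 : b / a = 1 / (a / b) := by rw [one_div_div]
  have h3 := two_eq (a / b) (by positivity) (by rw [h2] at h; linarith)
  have := (div_eq_one_iff_eq (ne_of_gt hb)).mp h3
  exact this

lemma seiarAux_b2 (s e i s' e' i' : ℝ) (hs : 0 < s) (he : 0 < e) (hi : 0 < i)
    (hs' : 0 < s') (he' : 0 < e') (hi' : 0 < i') :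
    0 ≤ s' / s + s / s' * (i / i') * (e' / e) + i' / i * (e / e') - 3 := by
  have hu : 0 < s' / s := by positivity
  have hv : 0 < i * e' / (i' * e) := by positivity
  have h3 := amgm3' (s' / s) (i * e' / (i' * e)) hu hv
  have heq : s' / s + s / s' * (i / i') * (e' / e) + i' / i * (e / e')
      = s' / s + (i * e' / (i' * e)) / (s' / s) + 1 / (i * e' / (i' * e)) := by
    field_simp
  rw [heq]
  linarith

lemma seiarAux_b2eq (s e i s' e' i' : ℝ) (hs : 0 < s) (he : 0 < e) (hi : 0 < i)
    (hs' : 0 < s') (he' : 0 < e') (hi' : 0 < i') (hss : s = s')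
    (h : s' / s + s / s' * (i / i') * (e' / e) + i' / i * (e / e') - 3 = 0) :
    i * e' = i' * e := by
  subst hss
  have hv : 0 < i * e' / (i' * e) := by positivity
  have heq : s / s + s / s * (i / i') * (e' / e) + i' / i * (e / e')
      = 1 + (i * e' / (i' * e)) + 1 / (i * e' / (i' * e)) := by
    field_simp
    try ring
  rw [heq] at h
  have h3 := two_eq (i * e' / (i' * e)) hv (by linarith)
  have := (div_eq_one_iff_eq (by positivity : i' * e ≠ 0)).mp h3
  exact this




/-- The Lyapunov function `V₂` for the endemic steady state of the SEIAR model has the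
stated derivative along positive solutions, which is nonpositive and vanishes exactly at
the endemic steady state. -/
theorem seiar_lyapunov_endemic
    (N μ βI βA k γI γA q : ℝ)
    (hN : 0 < N) (hμ : 0 < μ) (hβI : 0 < βI) (hβA : 0 < βA)
    (hk : 0 < k) (hγI : 0 < γI) (hγA : 0 < γA)
    (hq0 : 0 < q) (hq1 : q < 1)
    (Sstar Estar Istar Astar : ℝ)
    (hSstarpos : 0 < Sstar) (hEstarpos : 0 < Estar)
    (hIstarpos : 0 < Istar) (hAstarpos : 0 < Astar)
    (hrel1 : μ * N = βI * Sstar * Istar + βA * Sstar * Astar + μ * Sstar)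
    (hrel2 : βI * Sstar * Istar + βA * Sstar * Astar = (k + μ) * Estar)
    (hrel3 : k * (1 - q) * Estar = (γI + μ) * Istar)
    (hrel4 : k * q * Estar = (γA + μ) * Astar)
    (S E I A : ℝ → ℝ)
    (hSpos : ∀ t : ℝ, 0 < S t) (hEpos : ∀ t : ℝ, 0 < E t)
    (hIpos : ∀ t : ℝ, 0 < I t) (hApos : ∀ t : ℝ, 0 < A t)
    (hS : ∀ t : ℝ, HasDerivAt S (μ * N - βI * S t * I t - βA * S t * A t - μ * S t) t)
    (hE : ∀ t : ℝ, HasDerivAt E (βI * S t * I t + βA * S t * A t - (k + μ) * E t) t)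
    (hI : ∀ t : ℝ, HasDerivAt I (k * (1 - q) * E t - (γI + μ) * I t) t)
    (hA : ∀ t : ℝ, HasDerivAt A (k * q * E t - (γA + μ) * A t) t)
    (V₂ : ℝ → ℝ)
    (hV₂ : V₂ = fun t =>
      (S t - Sstar - Sstar * Real.log (S t / Sstar))
      + (E t - Estar - Estar * Real.log (E t / Estar))
      + βI * Sstar / (γI + μ) * (I t - Istar - Istar * Real.log (I t / Istar))
      + βA * Sstar / (γA + μ) * (A t - Astar - Astar * Real.log (A t / Astar))) :
    (∀ t : ℝ, HasDerivAt V₂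
      (-(μ * Sstar) * (S t / Sstar + Sstar / S t - 2)
       - βI * Sstar * Istar * (Sstar / S t
           + S t / Sstar * (I t / Istar) * (Estar / E t)
           + Istar / I t * (E t / Estar) - 3)
       - βA * Sstar * Astar * (Sstar / S t
           + S t / Sstar * (A t / Astar) * (Estar / E t)
           + Astar / A t * (E t / Estar) - 3)) t) ∧
    (∀ t : ℝ, deriv V₂ t ≤ 0) ∧
    (∀ t : ℝ, deriv V₂ t = 0 ↔
      S t = Sstar ∧ E t = Estar ∧ I t = Istar ∧ A t = Astar) := by
  subst hV₂
  have key1 : ∀ t : ℝ, HasDerivAt (fun t =>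
      (S t - Sstar - Sstar * Real.log (S t / Sstar))
      + (E t - Estar - Estar * Real.log (E t / Estar))
      + βI * Sstar / (γI + μ) * (I t - Istar - Istar * Real.log (I t / Istar))
      + βA * Sstar / (γA + μ) * (A t - Astar - Astar * Real.log (A t / Astar)))
      (-(μ * Sstar) * (S t / Sstar + Sstar / S t - 2)
       - βI * Sstar * Istar * (Sstar / S t
           + S t / Sstar * (I t / Istar) * (Estar / E t)
           + Istar / I t * (E t / Estar) - 3)
       - βA * Sstar * Astar * (Sstar / S t
           + S t / Sstar * (A t / Astar) * (Estar / E t)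
           + Astar / A t * (E t / Estar) - 3)) t :=
    fun t => my_deriv_comp μ βI βA k γI γA N q hμ hβI hβA hk hγI hγA
      Sstar Estar Istar Astar hSstarpos hEstarpos hIstarpos hAstarpos
      hrel1 hrel2 hrel3 hrel4 S E I A hSpos hEpos hIpos hApos hS hE hI hA t
  have hb1 : ∀ t : ℝ, 0 ≤ S t / Sstar + Sstar / S t - 2 :=
    fun t => seiarAux_b1 (S t) Sstar (hSpos t) hSstarpos
  have hb2 : ∀ t : ℝ, 0 ≤ Sstar / S t + S t / Sstar * (I t / Istar) * (Estar / E t)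
      + Istar / I t * (E t / Estar) - 3 :=
    fun t => seiarAux_b2 (S t) (E t) (I t) Sstar Estar Istar
      (hSpos t) (hEpos t) (hIpos t) hSstarpos hEstarpos hIstarpos
  have hb3 : ∀ t : ℝ, 0 ≤ Sstar / S t + S t / Sstar * (A t / Astar) * (Estar / E t)
      + Astar / A t * (E t / Estar) - 3 :=
    fun t => seiarAux_b2 (S t) (E t) (A t) Sstar Estar Astar
      (hSpos t) (hEpos t) (hApos t) hSstarpos hEstarpos hAstarpos
  have hc1 : (0:ℝ) < μ * Sstar := by positivity
  have hc2 : (0:ℝ) < βI * Sstar * Istar := by positivity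
  have hc3 : (0:ℝ) < βA * Sstar * Astar := by positivity
  refine ⟨key1, ?_, ?_⟩
  · intro t
    rw [(key1 t).deriv]
    have p1 := mul_nonneg hc1.le (hb1 t)
    have p2 := mul_nonneg hc2.le (hb2 t)
    have p3 := mul_nonneg hc3.le (hb3 t)
    linarith
  · intro t
    constructor
    · intro hzero
      rw [(key1 t).deriv] at hzero
      have p1 := mul_nonneg hc1.le (hb1 t)
      have p2 := mul_nonneg hc2.le (hb2 t)
      have p3 := mul_nonneg hc3.le (hb3 t)
      have hz1 : μ * Sstar * (S t / Sstar + Sstar / S t - 2) = 0 := by linarith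
      have hz2 : βI * Sstar * Istar * (Sstar / S t
          + S t / Sstar * (I t / Istar) * (Estar / E t)
          + Istar / I t * (E t / Estar) - 3) = 0 := by linarith
      have hz3 : βA * Sstar * Astar * (Sstar / S t
          + S t / Sstar * (A t / Astar) * (Estar / E t)
          + Astar / A t * (E t / Estar) - 3) = 0 := by linarith
      have hB1 : S t / Sstar + Sstar / S t - 2 = 0 :=
        (mul_eq_zero.mp hz1).resolve_left (ne_of_gt hc1)
      have hB2 : Sstar / S t + S t / Sstar * (I t / Istar) * (Estar / E t)
          + Istar / I t * (E t / Estar) - 3 = 0 :=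
        (mul_eq_zero.mp hz2).resolve_left (ne_of_gt hc2)
      have hB3 : Sstar / S t + S t / Sstar * (A t / Astar) * (Estar / E t)
          + Astar / A t * (E t / Estar) - 3 = 0 :=
        (mul_eq_zero.mp hz3).resolve_left (ne_of_gt hc3)
      have h0S : S t = Sstar := seiarAux_b1eq (S t) Sstar (hSpos t) hSstarpos hB1
      have hIE : I t * Estar = Istar * E t :=
        seiarAux_b2eq (S t) (E t) (I t) Sstar Estar Istar
          (hSpos t) (hEpos t) (hIpos t) hSstarpos hEstarpos hIstarpos h0S hB2
      have hAE : A t * Estar = Astar * E t :=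
        seiarAux_b2eq (S t) (E t) (A t) Sstar Estar Astar
          (hSpos t) (hEpos t) (hApos t) hSstarpos hEstarpos hAstarpos h0S hB3
      set lam : ℝ := E t / Estar with hlamdef
      have hlam0 : 0 < lam := div_pos (hEpos t) hEstarpos
      have h0E : E t = lam * Estar := by
        rw [hlamdef, div_mul_cancel₀ _ (ne_of_gt hEstarpos)]
      have h0I : I t = lam * Istar := by
        rw [hlamdef]
        field_simp
        linarith [hIE]
      have h0A : A t = lam * Astar := by
        rw [hlamdef]
        field_simp
        linarith [hAE]
      by_cases hlam1 : lam = 1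
      · rw [hlam1, one_mul] at h0E h0I h0A
        exact ⟨h0S, h0E, h0I, h0A⟩
      · exact absurd (seiarAux_contra N μ βI βA k γI γA q hμ hβI hβA hk hγI hγA hq0 hq1
          Sstar Estar Istar Astar hSstarpos hEstarpos hIstarpos hAstarpos
          hrel1 hrel2 hrel3 hrel4 S E I A hSpos hEpos hIpos hApos hS hE hI hA
          t lam hlam0 hlam1 h0S h0E h0I h0A) not_false
    · rintro ⟨h1, h2, h3, h4⟩
      rw [(key1 t).deriv, h1, h2, h3, h4]
      field_simp
      ring
end

section
/- The point ((1−p)N, pN, 0, 0, 0, 0) is an equilibrium of the SVEIAR system, and the basic reproductive ratio obtained from the next-generation matrix of the SVEIAR system at this disease-free steady state equals R₀^V = (1−εp)·R₀; that is, the matrix K^V = −T^V (Σ)⁻¹, where T^V has first row (0, β_I(1−εp)N, β_A(1−εp)N) and all other entries zero and Σ has rows (−(k+μ), 0, 0), (k(1−q), −(γ_I+μ), 0), (kq, 0, −(γ_A+μ)), has eigenvalues 0 (multiplicity 2) and (1−εp)(β_I N k(1−q)/((k+μ)(γ_I+μ)) + β_A N k q/((k+μ)(γ_A+μ))). -/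
open Matrix Polynomial

/-- The point `((1-p)N, pN, 0, 0, 0, 0)` is an equilibrium of the SVEIAR system, and the
next-generation matrix `K^V = -T^V Σ⁻¹` at this disease-free steady state has eigenvalues
`0` (with algebraic multiplicity 2) and `R₀^V = (1 - εp) R₀`. -/
theorem sveiar_dfe_and_R0V
    (N μ βI βA k γI γA q p ε : ℝ)
    (hN : 0 < N) (hμ : 0 < μ) (hβI : 0 < βI) (hβA : 0 < βA)
    (hk : 0 < k) (hγI : 0 < γI) (hγA : 0 < γA)
    (hq0 : 0 ≤ q) (hq1 : q ≤ 1) (hp0 : 0 ≤ p) (hp1 : p ≤ 1)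
    (hε0 : 0 ≤ ε) (hε1 : ε < 1)
    (R₀ R₀V : ℝ)
    (hR₀ : R₀ = βI * N * k * (1 - q) / ((k + μ) * (γI + μ))
              + βA * N * k * q / ((k + μ) * (γA + μ)))
    (hR₀V : R₀V = (1 - ε * p) * R₀)
    (TV Sig KV : Matrix (Fin 3) (Fin 3) ℝ)
    (hTV : TV = !![0, βI * (1 - ε * p) * N, βA * (1 - ε * p) * N; 0, 0, 0; 0, 0, 0])
    (hSig : Sig = !![-(k + μ), 0, 0;
                     k * (1 - q), -(γI + μ), 0;
                     k * q, 0, -(γA + μ)])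
    (hKV : KV = -(TV * Sig⁻¹)) :
    ((1 - p) * μ * N - βI * ((1 - p) * N) * 0 - βA * ((1 - p) * N) * 0
        - μ * ((1 - p) * N) = 0 ∧
     p * μ * N - (1 - ε) * (βI * (p * N) * 0 + βA * (p * N) * 0) - μ * (p * N) = 0 ∧
     ((1 - p) * N + (1 - ε) * (p * N)) * (βI * 0 + βA * 0) - (k + μ) * 0 = 0 ∧
     k * (1 - q) * 0 - (γI + μ) * 0 = 0 ∧
     k * q * 0 - (γA + μ) * 0 = 0 ∧
     γI * 0 + γA * 0 - μ * 0 = 0) ∧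
    KV.charpoly = X ^ 2 * (X - C R₀V) := by
  have hkμ : (k + μ) ≠ 0 := by positivity
  have hγIμ : (γI + μ) ≠ 0 := by positivity
  have hγAμ : (γA + μ) ≠ 0 := by positivity
  refine ⟨⟨by ring, by ring, by ring, by ring, by ring, by ring⟩, ?_⟩
  have hinv : Sig⁻¹ =
      !![-(1/(k+μ)), 0, 0;
         -(k*(1-q)/((k+μ)*(γI+μ))), -(1/(γI+μ)), 0;
         -(k*q/((k+μ)*(γA+μ))), 0, -(1/(γA+μ))] := by
    apply inv_eq_right_inv
    subst hSig
    ext i j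
    fin_cases i <;> fin_cases j <;>
      · simp [Matrix.mul_apply, Fin.sum_univ_three, Matrix.vecHead, Matrix.vecTail]
        try field_simp
        try ring
        try simp
  have hKV' : KV = !![R₀V, (1-ε*p)*βI*N/(γI+μ), (1-ε*p)*βA*N/(γA+μ); 0,0,0; 0,0,0] := by
    subst hKV hTV hR₀V hR₀
    rw [hinv]
    ext i j
    fin_cases i <;> fin_cases j <;>
      · simp [Matrix.mul_apply, Fin.sum_univ_three, Matrix.vecHead, Matrix.vecTail]
        try field_simp
        try ring
        try simp
  rw [hKV', Matrix.charpoly, Matrix.det_fin_three]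
  simp [charmatrix_apply, Matrix.scalar_apply, Matrix.vecHead, Matrix.vecTail]
  ring
end

section
/- For the quartic characteristic polynomial λ⁴ + α₃λ³ + α₂λ² + α₁λ + α₀ of the Jacobian of the SEIAR system at the endemic steady state, where α₃ = γ_I + γ_A + k + 3μ + μR₀ and α₀ = μR₀(k+μ)(γ_I+μ)(γ_A+μ) − μ(N/R₀)k(β_I(1−q)(γ_A+μ) + β_A q(γ_I+μ)), one has α₃ > 0 always, and α₀ > 0 if and only if R₀ > 1. -/
/-- For the quartic characteristic polynomial of the Jacobian at the endemic steady state
of the SEIAR model, the coefficient `α₃` is always positive and the constant term `α₀` is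
positive if and only if `R₀ > 1`. -/
theorem seiar_quartic_coefficients
    (N μ βI βA k γI γA q R₀ α₃ α₀ : ℝ)
    (hN : 0 < N) (hμ : 0 < μ) (hβI : 0 < βI) (hβA : 0 < βA)
    (hk : 0 < k) (hγI : 0 < γI) (hγA : 0 < γA)
    (hq0 : 0 ≤ q) (hq1 : q ≤ 1)
    (hR₀ : R₀ = βI * N * k * (1 - q) / ((k + μ) * (γI + μ))
              + βA * N * k * q / ((k + μ) * (γA + μ)))
    (hR₀pos : 0 < R₀)
    (hα₃ : α₃ = γI + γA + k + 3 * μ + μ * R₀)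
    (hα₀ : α₀ = μ * R₀ * (k + μ) * (γI + μ) * (γA + μ)
        - μ * (N / R₀) * k * (βI * (1 - q) * (γA + μ) + βA * q * (γI + μ))) :
    0 < α₃ ∧ (0 < α₀ ↔ 1 < R₀) := by
  have hkμ : 0 < k + μ := by linarith
  have hγIμ : 0 < γI + μ := by linarith
  have hγAμ : 0 < γA + μ := by linarith
  have hR₀ne : R₀ ≠ 0 := ne_of_gt hR₀pos
  have hkey : R₀ * ((k + μ) * (γI + μ) * (γA + μ))
      = N * k * (βI * (1 - q) * (γA + μ) + βA * q * (γI + μ)) := by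
    rw [hR₀]; field_simp
  have hP : 0 < μ * ((k + μ) * (γI + μ) * (γA + μ)) := by positivity
  have hα₀' : α₀ = μ * ((k + μ) * (γI + μ) * (γA + μ)) * (R₀ - 1) := by
    rw [hα₀]
    have h2 : μ * (N / R₀) * k * (βI * (1 - q) * (γA + μ) + βA * q * (γI + μ))
        = μ * ((k + μ) * (γI + μ) * (γA + μ)) := by
      field_simp
      linear_combination (-1) * hkey
    rw [h2]; ring
  refine ⟨by rw [hα₃]; nlinarith, ?_⟩
  rw [hα₀']
  constructor
  · intro h
    nlinarith
  · intro h
    nlinarith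
end
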